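/- arXiv:1003.4494 — 7 statements merged into one kernel-verified Lean document; each statement's English description precedes it below -/
import Mathlib

section
/- In the twist-knot game TKNTK with an even number n of twist precrossings, the second player (King Lear, who wins if the final resolution is knotted) has a winning strategy. -/
/-- The sign of a crossing resolution: `true ↦ +1`, `false ↦ -1`. -/
def sgn (b : Bool) : ℤ := if b then 1 else -1

/-- Sum of the signs of the `n` twist crossings (indices `0, …, n-1`). -/
def twistSum (n : ℕ) (f : Fin (n + 2) → Bool) : ℤ :=
  ∑ i : Fin n, sgn (f (Fin.castLE (by omega) i))

/-- A full resolution of the twist-knot shadow with `n` twist precrossings and two clasp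
precrossings (indices `n` and `n+1`) is knotted iff the clasp signs agree and the twist
sum either has absolute value `≥ 2` or equals the common clasp sign. -/
def Knotted (n : ℕ) (f : Fin (n + 2) → Bool) : Prop :=
  f ⟨n, by omega⟩ = f ⟨n + 1, by omega⟩ ∧
    (2 ≤ |twistSum n f| ∨ twistSum n f = sgn (f ⟨n, by omega⟩))

/-- Partial resolutions: each of the `k` crossings is unresolved (`none`) or carries a sign. -/
abbrev PartialRes (k : ℕ) := Fin k → Option Bool

/-- `Force A fuel moverIsForcer p` : with `fuel` moves remaining from position `p`, the
player whose winning condition on full resolutions is `A` can force the game (in which the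
two players alternately pick a still-unresolved crossing and assign it a sign of their
choice) to end in a full resolution satisfying `A`.  This backward-induction predicate is
equivalent to the existence of a winning strategy in the finite game. -/
def Force {k : ℕ} (A : (Fin k → Bool) → Prop) : ℕ → Bool → PartialRes k → Prop
  | 0, _, p => ∃ f : Fin k → Bool, (∀ i, p i = some (f i)) ∧ A f
  | m + 1, true, p => ∃ i, p i = none ∧ ∃ s : Bool,
      Force A m false (Function.update p i (some s))
  | m + 1, false, p => ∀ i, p i = none → ∀ s : Bool,
      Force A m true (Function.update p i (some s))

/-- The totally unresolved shadow. -/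
def emptyRes (k : ℕ) : PartialRes k := fun _ => none

namespace TKaux

def tw (n : ℕ) (i : Fin n) : Fin (n + 2) := Fin.castLE (by omega) i

lemma tw_inj {n : ℕ} : Function.Injective (tw n) := fun a b h => by
  simpa [tw, Fin.ext_iff] using h

lemma upd_ne {k : ℕ} (p : PartialRes k) {i j : Fin k} (h : (j : ℕ) ≠ (i : ℕ))
    (v : Option Bool) : Function.update p i v j = p j :=
  Function.update_of_ne (fun hc => h (congrArg Fin.val hc)) v p

def pSgn : Option Bool → ℤ
  | some b => sgn b
  | none => 0

def pT (n : ℕ) (p : PartialRes (n + 2)) : ℤ := ∑ i : Fin n, pSgn (p (tw n i))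

def uCard (k : ℕ) (p : PartialRes k) : ℕ :=
  (Finset.univ.filter (fun i => p i = none)).card

def uTw (n : ℕ) (p : PartialRes (n + 2)) : ℕ :=
  (Finset.univ.filter (fun i : Fin n => p (tw n i) = none)).card

structure Inv (n : ℕ) (p : PartialRes (n + 2)) : Prop where
  clasp : (p ⟨n, by omega⟩ = none ∧ p ⟨n+1, by omega⟩ = none) ∨
          (∃ b, p ⟨n, by omega⟩ = some b ∧ p ⟨n+1, by omega⟩ = some b)
  evenT : Even (pT n p)
  evenU : Even (uTw n p)
  big : (∀ i : Fin n, p (tw n i) = none) ∨ 2 ≤ |pT n p|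

lemma uCard_update {k : ℕ} (p : PartialRes k) (i : Fin k) (hi : p i = none) (s : Bool) :
    uCard k (Function.update p i (some s)) = uCard k p - 1 := by
  unfold uCard
  have : (Finset.univ.filter (fun j => Function.update p i (some s) j = none))
      = (Finset.univ.filter (fun j => p j = none)).erase i := by
    ext j
    rcases eq_or_ne j i with rfl | hj
    · simp
    · simp [Function.update_of_ne hj, hj]
  rw [this, Finset.card_erase_of_mem (by simp [hi])]

lemma tw_val_ne {n : ℕ} (j : Fin n) {i : Fin (n + 2)} (hi : n ≤ (i : ℕ)) :
    ((tw n j : Fin (n + 2)) : ℕ) ≠ (i : ℕ) := by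
  have hj : (j : ℕ) < n := j.isLt
  simp only [tw, Fin.coe_castLE]
  omega

lemma pT_update_clasp {n : ℕ} (p : PartialRes (n + 2)) (i : Fin (n + 2)) (hi : n ≤ (i : ℕ))
    (v : Option Bool) : pT n (Function.update p i v) = pT n p := by
  unfold pT
  exact Finset.sum_congr rfl fun j _ => by rw [upd_ne p (tw_val_ne j hi)]

lemma uTw_update_clasp {n : ℕ} (p : PartialRes (n + 2)) (i : Fin (n + 2)) (hi : n ≤ (i : ℕ))
    (v : Option Bool) : uTw n (Function.update p i v) = uTw n p := by
  unfold uTw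
  congr 1
  exact Finset.filter_congr fun j _ => by rw [upd_ne p (tw_val_ne j hi)]

lemma pT_update_tw {n : ℕ} (p : PartialRes (n + 2)) (j0 : Fin n) (h : p (tw n j0) = none)
    (v : Option Bool) : pT n (Function.update p (tw n j0) v) = pT n p + pSgn v := by
  unfold pT
  have key : ∀ j : Fin n, pSgn (Function.update p (tw n j0) v (tw n j)) =
      pSgn (p (tw n j)) + (if j = j0 then pSgn v else 0) := by
    intro j
    rcases eq_or_ne j j0 with rfl | hj
    · simp [h, pSgn]
    · rw [Function.update_of_ne (fun hc => hj (tw_inj hc)), if_neg hj, add_zero]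
  simp only [key, Finset.sum_add_distrib]
  congr 1
  simp

lemma uTw_update_tw {n : ℕ} (p : PartialRes (n + 2)) (j0 : Fin n) (h : p (tw n j0) = none)
    (s : Bool) : uTw n (Function.update p (tw n j0) (some s)) = uTw n p - 1 := by
  unfold uTw
  have : (Finset.univ.filter
        (fun j : Fin n => Function.update p (tw n j0) (some s) (tw n j) = none))
      = (Finset.univ.filter (fun j : Fin n => p (tw n j) = none)).erase j0 := by
    ext j
    rcases eq_or_ne j j0 with rfl | hj
    · simp
    · simp [Function.update_of_ne (fun hc => hj (tw_inj hc)), hj]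
  rw [this, Finset.card_erase_of_mem (by simp [h])]

lemma sgn_cases (b : Bool) : sgn b = 1 ∨ sgn b = -1 := by cases b <;> simp [sgn]

lemma key (n : ℕ) (hn1 : 1 ≤ n) :
    ∀ k (p : PartialRes (n + 2)), Inv n p → uCard (n + 2) p = 2 * k →
      Force (Knotted n) (2 * k) false p := by
  intro k
  induction k with
  | zero =>
    intro p hI hc
    show ∃ f : Fin (n+2) → Bool, (∀ i, p i = some (f i)) ∧ Knotted n f
    have hall : ∀ i, p i ≠ none := by
      intro i hi
      have hmem : i ∈ Finset.univ.filter (fun j => p j = none) := by simp [hi]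
      have hempt : (Finset.univ.filter (fun j => p j = none)) = (∅ : Finset (Fin (n+2))) :=
        Finset.card_eq_zero.mp (by simpa [uCard] using hc)
      rw [hempt] at hmem
      exact absurd hmem (Finset.notMem_empty i)
    refine ⟨fun i => (p i).getD true, fun i => ?_, ?_, ?_⟩
    · cases hp : p i with
      | none => exact absurd hp (hall i)
      | some b => simp [hp]
    · rcases hI.clasp with ⟨h1, _⟩ | ⟨b, h1, h2⟩
      · exact absurd h1 (hall _)
      · simp [h1, h2]
    · left
      have hts : twistSum n (fun i => (p i).getD true) = pT n p := by
        unfold twistSum pT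
        refine Finset.sum_congr rfl fun j _ => ?_
        show sgn ((p (tw n j)).getD true) = pSgn (p (tw n j))
        cases hp : p (tw n j) with
        | none => exact absurd hp (hall _)
        | some b => simp [hp, pSgn]
      rw [hts]
      rcases hI.big with hb | hb
      · exact absurd (hb ⟨0, hn1⟩) (hall _)
      · exact hb
  | succ k ih =>
    intro p hI hc
    have h2 : 2 * (k + 1) = (2 * k + 1) + 1 := by omega
    rw [h2]
    intro i hi s
    show ∃ j, Function.update p i (some s) j = none ∧ ∃ s' : Bool,
      Force (Knotted n) (2 * k) false
        (Function.update (Function.update p i (some s)) j (some s'))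
    have hTe := hI.evenT
    rw [Int.even_iff] at hTe
    by_cases hiv : (i : ℕ) < n
    · -- Ursula resolved a twist crossing
      set j0 : Fin n := ⟨i, hiv⟩ with hj0
      have hij0 : i = tw n j0 := by simp [tw, Fin.ext_iff, hj0]
      set p1 := Function.update p i (some s) with hp1
      have hpT1 : pT n p1 = pT n p + sgn s := by
        rw [hp1, hij0, pT_update_tw p j0 (hij0 ▸ hi) (some s)]; rfl
      have hT1ne : pT n p1 ≠ 0 := by
        rcases sgn_cases s with h | h <;> rw [hpT1, h] <;> omega
      have hj0mem : j0 ∈ Finset.univ.filter (fun j : Fin n => p (tw n j) = none) := by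
        simp [← hij0, hi]
      have huTw2 : 2 ≤ uTw n p := by
        have h1 : 1 ≤ uTw n p := Finset.card_pos.mpr ⟨j0, hj0mem⟩
        rcases hI.evenU with ⟨m, hm⟩; omega
      have hne : ((Finset.univ.filter
          (fun j : Fin n => p (tw n j) = none)).erase j0).Nonempty := by
        rw [← Finset.card_pos, Finset.card_erase_of_mem hj0mem]
        unfold uTw at huTw2; omega
      obtain ⟨j1, hj1⟩ := hne
      rw [Finset.mem_erase, Finset.mem_filter] at hj1
      obtain ⟨hj1ne, _, hj1none⟩ := hj1
      have hp1j1 : p1 (tw n j1) = none := by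
        rw [hp1, hij0, Function.update_of_ne (fun hc => hj1ne (tw_inj hc)), hj1none]
      refine ⟨tw n j1, hp1j1, decide (0 < pT n p1), ?_⟩
      set s' : Bool := decide (0 < pT n p1) with hs'
      set p2 := Function.update p1 (tw n j1) (some s') with hp2
      have hpT2 : pT n p2 = pT n p1 + sgn s' := by
        rw [hp2, pT_update_tw p1 j1 hp1j1 (some s')]; rfl
      have hbig2 : 2 ≤ |pT n p2| := by
        rcases lt_or_gt_of_ne hT1ne with hlt | hgt
        · have hsf : s' = false := by simp [hs']; omega
          rw [hpT2, hsf]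
          have h1 : pT n p1 ≤ -1 := by omega
          simp only [sgn, if_false, Bool.false_eq_true]
          rw [abs_of_nonpos (by omega)]
          omega
        · have hst : s' = true := by simp [hs', hgt]
          rw [hpT2, hst]
          simp only [sgn, if_true]
          rw [abs_of_nonneg (by omega)]
          omega
      have hclval : ∀ j : Fin (n + 2), n ≤ (j : ℕ) → p2 j = p j := by
        intro j hj
        rw [hp2, upd_ne _ (Ne.symm (tw_val_ne j1 hj)), hp1, hij0,
          upd_ne _ (Ne.symm (tw_val_ne j0 hj))]
      apply ih
      · constructor
        · rcases hI.clasp with ⟨h1, h2'⟩ | ⟨b, h1, h2'⟩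
          · left
            rw [hclval _ (by simp), hclval _ (by simp)]
            exact ⟨h1, h2'⟩
          · right
            exact ⟨b, by rw [hclval _ (by simp)]; exact h1,
              by rw [hclval _ (by simp)]; exact h2'⟩
        · rw [Int.even_iff, hpT2, hpT1]
          rcases sgn_cases s with h | h <;> rcases sgn_cases s' with h' | h' <;>
            rw [h, h'] <;> omega
        · have e1 : uTw n p1 = uTw n p - 1 := by
            rw [hp1, hij0, uTw_update_tw p j0 (hij0 ▸ hi)]
          have e2 : uTw n p2 = uTw n p1 - 1 := by
            rw [hp2, uTw_update_tw p1 j1 hp1j1]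
          rcases hI.evenU with ⟨m, hm⟩
          rw [Nat.even_iff] at *
          omega
        · right; exact hbig2
      · have e1 : uCard (n + 2) p1 = uCard (n + 2) p - 1 := by
          rw [hp1, uCard_update p i hi]
        have e2 : uCard (n + 2) p2 = uCard (n + 2) p1 - 1 := by
          rw [hp2, uCard_update p1 (tw n j1) hp1j1]
        omega
    · -- Ursula resolved a clasp crossing
      push_neg at hiv
      have hiv2 : (i : ℕ) < n + 2 := i.isLt
      have hbothnone : p ⟨n, by omega⟩ = none ∧ p ⟨n+1, by omega⟩ = none := by
        rcases hI.clasp with h | ⟨b, h1, h2'⟩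
        · exact h
        · exfalso
          have : (i : ℕ) = n ∨ (i : ℕ) = n + 1 := by omega
          rcases this with h | h
          · have : i = (⟨n, by omega⟩ : Fin (n + 2)) := Fin.ext h
            rw [this, h1] at hi; exact Option.some_ne_none b hi
          · have : i = (⟨n + 1, by omega⟩ : Fin (n + 2)) := Fin.ext h
            rw [this, h2'] at hi; exact Option.some_ne_none b hi
      -- the other clasp
      set j : Fin (n + 2) := if (i : ℕ) = n then ⟨n + 1, by omega⟩ else ⟨n, by omega⟩ with hjdef
      have hjval : (j : ℕ) = n ∨ (j : ℕ) = n + 1 := by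
        rw [hjdef]; split <;> simp
      have hjn : n ≤ (j : ℕ) := by omega
      have hjnei : (j : ℕ) ≠ (i : ℕ) := by
        rw [hjdef]; split <;> simp <;> omega
      have hpj : p j = none := by
        rcases hjval with h | h
        · rw [show j = (⟨n, by omega⟩ : Fin (n+2)) from Fin.ext h]; exact hbothnone.1
        · rw [show j = (⟨n+1, by omega⟩ : Fin (n+2)) from Fin.ext h]; exact hbothnone.2
      set p1 := Function.update p i (some s) with hp1
      have hp1j : p1 j = none := by rw [hp1, upd_ne p hjnei, hpj]
      refine ⟨j, hp1j, s, ?_⟩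
      set p2 := Function.update p1 j (some s) with hp2
      have hin : n ≤ (i : ℕ) := hiv
      have hp2i : p2 i = some s := by
        rw [hp2, upd_ne _ (Ne.symm hjnei), hp1, Function.update_self]
      have hp2j : p2 j = some s := by rw [hp2, Function.update_self]
      have hivval : (i : ℕ) = n ∨ (i : ℕ) = n + 1 := by omega
      have hcln : p2 ⟨n, by omega⟩ = some s := by
        rcases hivval with h | h
        · rw [show (⟨n, by omega⟩ : Fin (n+2)) = i from Fin.ext h.symm]; exact hp2i
        · have : (j : ℕ) = n := by omega
          rw [show (⟨n, by omega⟩ : Fin (n+2)) = j from Fin.ext this.symm]; exact hp2j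
      have hcln1 : p2 ⟨n + 1, by omega⟩ = some s := by
        rcases hivval with h | h
        · have : (j : ℕ) = n + 1 := by
            rw [hjdef, if_pos h]
          rw [show (⟨n+1, by omega⟩ : Fin (n+2)) = j from Fin.ext this.symm]; exact hp2j
        · rw [show (⟨n+1, by omega⟩ : Fin (n+2)) = i from Fin.ext h.symm]; exact hp2i
      have htwfix : ∀ j' : Fin n, p2 (tw n j') = p (tw n j') := by
        intro j'
        rw [hp2, upd_ne _ (tw_val_ne j' hjn), hp1, upd_ne _ (tw_val_ne j' hin)]
      have hpT2 : pT n p2 = pT n p := by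
        unfold pT
        exact Finset.sum_congr rfl fun j' _ => by rw [htwfix j']
      apply ih
      · constructor
        · exact Or.inr ⟨s, hcln, hcln1⟩
        · rw [hpT2]; exact hI.evenT
        · have : uTw n p2 = uTw n p := by
            unfold uTw
            congr 1
            exact Finset.filter_congr fun j' _ => by rw [htwfix j']
          rw [this]; exact hI.evenU
        · rcases hI.big with hb | hb
          · exact Or.inl fun j' => by rw [htwfix j']; exact hb j'
          · exact Or.inr (by rw [hpT2]; exact hb)
      · have e1 : uCard (n + 2) p1 = uCard (n + 2) p - 1 := by
          rw [hp1, uCard_update p i hi]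
        have e2 : uCard (n + 2) p2 = uCard (n + 2) p1 - 1 := by
          rw [hp2, uCard_update p1 j hp1j]
        omega

end TKaux

/-- TKNTK on a twist-knot shadow with an even number `n` of twist precrossings:
King Lear (goal: knotted), moving second, has a winning strategy. -/
theorem tkntk_even_lear_second_wins (n : ℕ) (hn1 : 1 ≤ n) (hn : Even n) :
    Force (Knotted n) (n + 2) false (emptyRes (n + 2)) := by
  obtain ⟨m, hm⟩ := hn
  have hk := TKaux.key n hn1 (m + 1) (emptyRes (n + 2)) ?_ ?_
  · rwa [show 2 * (m + 1) = n + 2 by omega] at hk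
  · constructor
    · exact Or.inl ⟨rfl, rfl⟩
    · simp [TKaux.pT, emptyRes, TKaux.pSgn]
    · have : TKaux.uTw n (emptyRes (n + 2)) = n := by
        simp [TKaux.uTw, emptyRes]
      rw [this]; exact ⟨m, hm⟩
    · exact Or.inl fun _ => rfl
  · simp [TKaux.uCard, emptyRes]
    omega
end

section
/- In the twist-knot game TKNTK with an even number n of twist precrossings, if King Lear (who wins if the final resolution is knotted) moves first, then Ursula (the second player, who wins if the final resolution is unknotted) has a winning strategy. -/
namespace TKAux

variable {n : ℕ}

def ca (n : ℕ) : Fin (n + 2) := ⟨n, by omega⟩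
def cb (n : ℕ) : Fin (n + 2) := ⟨n + 1, by omega⟩

lemma ca_ne_cb : ca n ≠ cb n := by
  simp [ca, cb, Fin.ext_iff]

def ClaspInv (p : PartialRes (n + 2)) : Prop :=
  (p (ca n) = none ∧ p (cb n) = none) ∨ ∃ c : Bool, p (ca n) = some c ∧ p (cb n) = some (!c)

def nones (p : PartialRes (n + 2)) : Finset (Fin (n + 2)) :=
  Finset.univ.filter (fun j => p j = none)

lemma nones_update (p : PartialRes (n + 2)) (i : Fin (n + 2)) (s : Bool) :
    nones (Function.update p i (some s)) = (nones p).erase i := by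
  ext j
  rcases eq_or_ne j i with rfl | h
  · simp [nones, Function.update_self]
  · simp [nones, Function.update_of_ne h, h]

lemma card_nones_update (p : PartialRes (n + 2)) (i : Fin (n + 2)) (hi : p i = none)
    (s : Bool) : (nones (Function.update p i (some s))).card = (nones p).card - 1 := by
  rw [nones_update, Finset.card_erase_of_mem]
  simp [nones, hi]

lemma main (t : ℕ) : ∀ p : PartialRes (n + 2), (nones p).card = 2 * t → ClaspInv p →
    Force (fun f => ¬ Knotted n f) (2 * t) false p := by
  induction t with
  | zero =>
    intro p hcard hinv
    have hall : ∀ i, p i ≠ none := by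
      intro i hi
      have : i ∈ nones p := by simp [nones, hi]
      simp [Finset.card_eq_zero.mp hcard] at this
    refine ⟨fun i => (p i).getD false, fun i => ?_, fun hk => ?_⟩
    · cases h : p i with
      | none => exact absurd h (hall i)
      | some b => simp [h]
    · rcases hinv with ⟨h1, _⟩ | ⟨c, h1, h2⟩
      · exact hall _ h1
      · have := hk.1
        rw [show (⟨n, by omega⟩ : Fin (n+2)) = ca n from rfl,
            show (⟨n+1, by omega⟩ : Fin (n+2)) = cb n from rfl] at this
        simp [h1, h2] at this
  | succ t ih =>
    intro p hcard hinv
    have h22 : 2 * (t + 1) = 2 * t + 1 + 1 := by ring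
    rw [h22]
    intro i hi s
    -- after Lear's move
    set p1 := Function.update p i (some s) with hp1
    have hcard1 : (nones p1).card = 2 * t + 1 := by
      rw [hp1, card_nones_update p i hi s, hcard]; omega
    by_cases hia : i = ca n
    · -- Ursula answers at cb with !s
      subst hia
      have hb : p (cb n) = none := by
        rcases hinv with ⟨_, h⟩ | ⟨c, h1, _⟩
        · exact h
        · rw [hi] at h1; exact absurd h1 (by simp)
      refine ⟨cb n, ?_, !s, ?_⟩
      · rw [hp1, Function.update_of_ne (Ne.symm ca_ne_cb), hb]
      · apply ih
        · rw [card_nones_update p1 (cb n)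
            (by rw [hp1, Function.update_of_ne (Ne.symm ca_ne_cb), hb]) (!s), hcard1]
          omega
        · exact Or.inr ⟨s, by
            rw [Function.update_of_ne ca_ne_cb, hp1, Function.update_self], by
            rw [Function.update_self]⟩
    · by_cases hib : i = cb n
      · -- Ursula answers at ca with !s
        subst hib
        have ha : p (ca n) = none := by
          rcases hinv with ⟨h, _⟩ | ⟨c, _, h2⟩
          · exact h
          · rw [hi] at h2; exact absurd h2 (by simp)
        refine ⟨ca n, ?_, !s, ?_⟩
        · rw [hp1, Function.update_of_ne ca_ne_cb, ha]
        · apply ih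
          · rw [card_nones_update p1 (ca n)
              (by rw [hp1, Function.update_of_ne ca_ne_cb, ha]) (!s), hcard1]
            omega
          · exact Or.inr ⟨!s, by rw [Function.update_self], by
              rw [Function.update_of_ne (Ne.symm ca_ne_cb), hp1, Function.update_self,
                Bool.not_not]⟩
      · -- Lear played a twist; clasps of p1 are as in p
        have hinv1 : ClaspInv p1 := by
          rcases hinv with ⟨h1, h2⟩ | ⟨c, h1, h2⟩
          · exact Or.inl ⟨by rwa [hp1, Function.update_of_ne (fun h => hia h.symm)],
              by rwa [hp1, Function.update_of_ne (fun h => hib h.symm)]⟩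
          · exact Or.inr ⟨c, by rwa [hp1, Function.update_of_ne (fun h => hia h.symm)],
              by rwa [hp1, Function.update_of_ne (fun h => hib h.symm)]⟩
        -- find an unresolved index distinct from both clasps
        have hexists : ∃ j, p1 j = none ∧ j ≠ ca n ∧ j ≠ cb n := by
          rcases hinv1 with ⟨h1, h2⟩ | ⟨c, h1, h2⟩
          · -- both clasps none: erase them, card odd ≥ 3? card - 2 ≥ 1
            have hmem : ca n ∈ nones p1 := by simp [nones, h1]
            have hmem2 : cb n ∈ nones p1 := by simp [nones, h2]
            have hsub : {ca n, cb n} ⊆ nones p1 := by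
              intro x hx; simp at hx; rcases hx with rfl | rfl <;> assumption
            have hc2 : ({ca n, cb n} : Finset (Fin (n+2))).card = 2 := by
              rw [Finset.card_insert_of_notMem (by simp [ca_ne_cb]), Finset.card_singleton]
            have h2le : 2 ≤ (nones p1).card := by
              have h' := Finset.card_le_card hsub
              rwa [hc2] at h'
            have hpos : 0 < ((nones p1) \ {ca n, cb n}).card := by
              rw [Finset.card_sdiff_of_subset hsub, hcard1, hc2]
              omega
            obtain ⟨j, hj⟩ := Finset.card_pos.mp hpos
            simp only [Finset.mem_sdiff, Finset.mem_insert, Finset.mem_singleton, nones,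
              Finset.mem_filter] at hj
            exact ⟨j, hj.1.2, fun h => hj.2 (Or.inl h), fun h => hj.2 (Or.inr h)⟩
          · have hne : (nones p1).Nonempty := Finset.card_pos.mp (by omega)
            obtain ⟨j, hj⟩ := hne
            simp only [nones, Finset.mem_filter] at hj
            refine ⟨j, hj.2, ?_, ?_⟩
            · rintro rfl; rw [hj.2] at h1; exact absurd h1 (by simp)
            · rintro rfl; rw [hj.2] at h2; exact absurd h2 (by simp)
        obtain ⟨j, hjn, hja, hjb⟩ := hexists
        refine ⟨j, hjn, false, ?_⟩
        apply ih
        · rw [card_nones_update p1 j hjn false, hcard1]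
          omega
        · rcases hinv1 with ⟨h1, h2⟩ | ⟨c, h1, h2⟩
          · exact Or.inl ⟨by rwa [Function.update_of_ne (fun h => hja h.symm)],
              by rwa [Function.update_of_ne (fun h => hjb h.symm)]⟩
          · exact Or.inr ⟨c, by rwa [Function.update_of_ne (fun h => hja h.symm)],
              by rwa [Function.update_of_ne (fun h => hjb h.symm)]⟩

end TKAux

/-- TKNTK with an even number `n` of twist precrossings and King Lear moving first:
Ursula (goal: unknotted), moving second, has a winning strategy. -/
theorem tkntk_even_lear_first_ursula_wins (n : ℕ) (hn : Even n) :
    Force (fun f => ¬ Knotted n f) (n + 2) false (emptyRes (n + 2)) := by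
  obtain ⟨t, ht⟩ := hn
  have h : n + 2 = 2 * (t + 1) := by omega
  have hm := TKAux.main (n := n) (t + 1) (emptyRes (n + 2))
    (by simp [TKAux.nones, emptyRes]; omega) (Or.inl ⟨rfl, rfl⟩)
  rwa [← h] at hm
end

section
/- In the twist-knot game TKNTK with an odd number n of twist precrossings, Ursula (who wins if the final resolution is unknotted) has a winning strategy as the first player. -/
def pr (n v : ℕ) : ℕ :=
  if v = 0 then 0 else if v = n then n + 1 else if v = n + 1 then n
  else if v % 2 = 1 then v + 1 else v - 1

lemma pr_lt {n v : ℕ} (hn : n % 2 = 1) (hv : v < n + 2) : pr n v < n + 2 := by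
  unfold pr; split_ifs <;> first | omega | exact ‹False›.elim

lemma pr_invol {n v : ℕ} (hn : n % 2 = 1) (hv : v < n + 2) : pr n (pr n v) = v := by
  unfold pr; split_ifs <;> first | omega | exact ‹False›.elim

lemma pr_ne {n v : ℕ} (hn : n % 2 = 1) (h0 : v ≠ 0) (hv : v < n + 2) : pr n v ≠ v := by
  unfold pr; split_ifs <;> first | omega | exact ‹False›.elim

lemma pr_ne_zero {n v : ℕ} (hn : n % 2 = 1) (h0 : v ≠ 0) (hv : v < n + 2) : pr n v ≠ 0 := by
  unfold pr; split_ifs <;> first | omega | exact ‹False›.elim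

lemma pr_twist {n v : ℕ} (hn : n % 2 = 1) (h0 : v ≠ 0) (hv : v < n) : pr n v < n := by
  unfold pr; split_ifs <;> first | omega | exact ‹False›.elim

lemma pr_n {n : ℕ} (hn : n % 2 = 1) : pr n n = n + 1 := by
  unfold pr; split_ifs <;> first | omega | exact ‹False›.elim

lemma pr_n1 {n : ℕ} (hn : n % 2 = 1) : pr n (n + 1) = n := by
  unfold pr; split_ifs <;> first | omega | exact ‹False›.elim

def sig (n : ℕ) (hn : n % 2 = 1) (i : Fin (n + 2)) : Fin (n + 2) :=
  ⟨pr n i, pr_lt hn i.isLt⟩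

lemma sig_invol (n : ℕ) (hn : n % 2 = 1) (x : Fin (n + 2)) :
    sig n hn (sig n hn x) = x := Fin.ext (pr_invol hn x.isLt)

def Good (n : ℕ) (hn : n % 2 = 1) (p : PartialRes (n + 2)) : Prop :=
  p ⟨0, by omega⟩ ≠ none ∧
  (∀ i : Fin (n + 2), (i : ℕ) ≠ 0 → (p i = none ↔ p (sig n hn i) = none)) ∧
  (∀ a b : Bool, p ⟨n, by omega⟩ = some a → p ⟨n + 1, by omega⟩ = some b → a = !b)


lemma main (n : ℕ) (hn : n % 2 = 1) : ∀ j (p : PartialRes (n + 2)),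
    (Finset.univ.filter (fun i => p i = none)).card = 2 * j →
    Good n hn p →
    Force (fun f => ¬ Knotted n f) (2 * j) false p := by
  intro j
  induction j with
  | zero =>
    intro p hcard hgood
    have hall : ∀ i : Fin (n + 2), p i ≠ none := by
      intro i hi
      have hmem : i ∈ Finset.univ.filter (fun i => p i = none) := by simp [hi]
      rw [Finset.card_eq_zero.mp hcard] at hmem
      exact absurd hmem (Finset.notMem_empty i)
    set f : Fin (n + 2) → Bool := fun i => (p i).get (Option.ne_none_iff_isSome.mp (hall i))
      with hf
    have hsome : ∀ x, p x = some (f x) := fun x => (Option.some_get _).symm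
    refine ⟨f, hsome, ?_⟩
    intro hk
    have h := hgood.2.2 (f ⟨n, by omega⟩) (f ⟨n + 1, by omega⟩) (hsome _) (hsome _)
    exact Bool.not_ne_self _ (hk.1.symm.trans h).symm
  | succ j ih =>
    intro p hcard hgood
    rw [show 2 * (j + 1) = (2 * j + 1) + 1 by ring]
    intro i hi s
    have hi0 : (i : ℕ) ≠ 0 := by
      intro h
      exact hgood.1 ((Fin.ext h : i = ⟨0, by omega⟩) ▸ hi)
    have hσne : sig n hn i ≠ i := Fin.ne_of_val_ne (pr_ne hn hi0 i.isLt)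
    have hσ0 : (sig n hn i : ℕ) ≠ 0 := pr_ne_zero hn hi0 i.isLt
    have hpσ : p (sig n hn i) = none := (hgood.2.1 i hi0).mp hi
    set t : Bool := if n ≤ (i : ℕ) then !s else s with ht
    refine ⟨sig n hn i, ?_, t, ?_⟩
    · rw [Function.update_of_ne hσne]; exact hpσ
    set q := Function.update (Function.update p i (some s)) (sig n hn i) (some t) with hqdef
    have hq : ∀ x, q x = if x = sig n hn i then some t else if x = i then some s else p x := by
      intro x; simp [hqdef, Function.update_apply]
    apply ih
    · have hset : Finset.univ.filter (fun x => q x = none) =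
          ((Finset.univ.filter (fun x => p x = none)).erase i).erase (sig n hn i) := by
        ext x
        by_cases h1 : x = sig n hn i <;> by_cases h2 : x = i <;>
          simp [Finset.mem_erase, hq, h1, h2, hσne, Ne.symm hσne]
      have hm1 : i ∈ Finset.univ.filter (fun x => p x = none) := by simp [hi]
      have hm2 : sig n hn i ∈ (Finset.univ.filter (fun x => p x = none)).erase i :=
        Finset.mem_erase.mpr ⟨hσne, by simp [hpσ]⟩
      rw [hset, Finset.card_erase_of_mem hm2, Finset.card_erase_of_mem hm1, hcard]
      omega
    refine ⟨?_, ?_, ?_⟩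
    · have h0σ : (0 : Fin (n + 2)) ≠ sig n hn i :=
        fun h => hσ0 (congrArg Fin.val h).symm
      have h0i : (0 : Fin (n + 2)) ≠ i :=
        fun h => hi0 (congrArg Fin.val h).symm
      simpa [hq, h0σ, h0i] using hgood.1
    · intro l hl0
      by_cases hl1 : l = i
      · subst hl1
        simp [hq, hσne, Ne.symm hσne]
      by_cases hl2 : l = sig n hn i
      · subst hl2
        rw [sig_invol]
        simp [hq, hσne, Ne.symm hσne, hl1]
      · have h1 : sig n hn l ≠ sig n hn i := by
          intro h
          have := congrArg (sig n hn) h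
          rw [sig_invol, sig_invol] at this
          exact hl1 this
        have h2 : sig n hn l ≠ i := by
          intro h
          have := congrArg (sig n hn) h
          rw [sig_invol] at this
          exact hl2 this
        simpa [hq, hl1, hl2, h1, h2] using hgood.2.1 l hl0
    · intro a b ha hb
      rcases lt_trichotomy (i : ℕ) n with hcase | hcase | hcase
      · -- twist move
        have hσlt : pr n (i : ℕ) < n := pr_twist hn hi0 hcase
        have e1 : (⟨n, by omega⟩ : Fin (n + 2)) ≠ sig n hn i := Fin.ne_of_val_ne (by
          show n ≠ pr n (i : ℕ); omega)
        have e2 : (⟨n, by omega⟩ : Fin (n + 2)) ≠ i := Fin.ne_of_val_ne (by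
          show n ≠ (i : ℕ); omega)
        have e3 : (⟨n + 1, by omega⟩ : Fin (n + 2)) ≠ sig n hn i := Fin.ne_of_val_ne (by
          show n + 1 ≠ pr n (i : ℕ); omega)
        have e4 : (⟨n + 1, by omega⟩ : Fin (n + 2)) ≠ i := Fin.ne_of_val_ne (by
          show n + 1 ≠ (i : ℕ); omega)
        rw [hq, if_neg e1, if_neg e2] at ha
        rw [hq, if_neg e3, if_neg e4] at hb
        exact hgood.2.2 a b ha hb
      · -- i is clasp n, sig i is clasp n+1
        have hieq : (⟨n, by omega⟩ : Fin (n + 2)) = i := Fin.ext hcase.symm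
        have hσv : pr n (i : ℕ) = n + 1 := by rw [hcase]; exact pr_n hn
        have e1 : (⟨n, by omega⟩ : Fin (n + 2)) ≠ sig n hn i :=
          Fin.ne_of_val_ne (by show n ≠ pr n (i : ℕ); rw [hσv]; omega)
        have hσeq : (⟨n + 1, by omega⟩ : Fin (n + 2)) = sig n hn i := Fin.ext hσv.symm
        have htv : t = !s := by rw [ht, if_pos (by omega)]
        rw [hq, if_neg e1, if_pos hieq] at ha
        rw [hq, if_pos hσeq, htv] at hb
        injection ha with ha
        injection hb with hb
        subst ha; subst hb; simp
      · -- i is clasp n+1, sig i is clasp n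
        have hival : (i : ℕ) = n + 1 := by omega
        have hieq : (⟨n + 1, by omega⟩ : Fin (n + 2)) = i := Fin.ext hival.symm
        have hσv : pr n (i : ℕ) = n := by rw [hival]; exact pr_n1 hn
        have e1 : (⟨n + 1, by omega⟩ : Fin (n + 2)) ≠ sig n hn i :=
          Fin.ne_of_val_ne (by show n + 1 ≠ pr n (i : ℕ); rw [hσv]; omega)
        have hσeq : (⟨n, by omega⟩ : Fin (n + 2)) = sig n hn i := Fin.ext hσv.symm
        have htv : t = !s := by rw [ht, if_pos (by omega)]
        rw [hq, if_pos hσeq, htv] at ha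
        rw [hq, if_neg e1, if_pos hieq] at hb
        injection ha with ha
        injection hb with hb
        subst ha; subst hb; simp


/-- TKNTK with an odd number `n` of twist precrossings:
Ursula (goal: unknotted) has a winning strategy moving first. -/
theorem tkntk_odd_ursula_first_wins (n : ℕ) (hn : Odd n) :
    Force (fun f => ¬ Knotted n f) (n + 2) true (emptyRes (n + 2)) := by
  obtain ⟨k, hk⟩ := hn
  have hn2 : n % 2 = 1 := by omega
  refine ⟨⟨0, by omega⟩, rfl, true, ?_⟩
  have hp : Force (fun f => ¬ Knotted n f) (2 * (k + 1)) false
      (Function.update (emptyRes (n + 2)) ⟨0, by omega⟩ (some true)) := by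
    apply main n hn2
    · have hset : Finset.univ.filter
          (fun x => Function.update (emptyRes (n + 2)) (⟨0, by omega⟩ : Fin (n + 2))
            (some true) x = none) = Finset.univ.erase ⟨0, by omega⟩ := by
        ext x
        by_cases hx : x = (⟨0, by omega⟩ : Fin (n + 2)) <;>
          simp [Function.update_apply, emptyRes, hx]
      rw [hset, Finset.card_erase_of_mem (Finset.mem_univ _), Finset.card_univ,
        Fintype.card_fin]
      omega
    · refine ⟨?_, ?_, ?_⟩
      · simp [Function.update_apply, emptyRes]
      · intro l hl0
        have h1 : l ≠ (0 : Fin (n + 2)) := fun h => hl0 (congrArg Fin.val h)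
        have h2 : sig n hn2 l ≠ (0 : Fin (n + 2)) :=
          fun h => (pr_ne_zero hn2 hl0 l.isLt) (congrArg Fin.val h)
        simp [Function.update_apply, emptyRes, h1, h2]
      · intro a b ha hb
        have h1 : (⟨n, by omega⟩ : Fin (n + 2)) ≠ ⟨0, by omega⟩ := by
          simp only [ne_eq, Fin.mk.injEq]; omega
        rw [Function.update_of_ne h1] at ha
        exact absurd ha (by simp [emptyRes])
  rwa [show 2 * (k + 1) = n + 1 by omega] at hp
end

section
/- In the twist-knot game TKNTK with an odd number n of twist precrossings, Ursula (who wins if the final resolution is unknotted) has a winning strategy as the second player. -/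
-- auxiliary
def unres {k : ℕ} (p : PartialRes k) : Finset (Fin k) :=
  Finset.univ.filter (fun i => p i = none)

lemma mem_unres {k : ℕ} {p : PartialRes k} {i : Fin k} : i ∈ unres p ↔ p i = none := by
  simp [unres]

lemma unres_update {k : ℕ} (p : PartialRes k) (i : Fin k) (s : Bool) (h : p i = none) :
    unres (Function.update p i (some s)) = (unres p).erase i := by
  ext j
  by_cases hj : j = i
  · subst hj; simp [mem_unres, Function.update_self]
  · simp [mem_unres, Function.update_of_ne hj, hj]

lemma card_unres_update {k : ℕ} (p : PartialRes k) (i : Fin k) (s : Bool) (h : p i = none) :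
    (unres (Function.update p i (some s))).card = (unres p).card - 1 := by
  rw [unres_update p i s h, Finset.card_erase_of_mem (mem_unres.2 h)]

lemma force_of_all {k : ℕ} (A : (Fin k → Bool) → Prop) :
    ∀ (m : ℕ) (b : Bool) (p : PartialRes k),
      m = (unres p).card →
      (∀ f : Fin k → Bool, (∀ i s, p i = some s → f i = s) → A f) →
      Force A m b p
  | 0, b, p, hm, h => by
    have hres : ∀ i, p i ≠ none := by
      intro i hnone
      have : i ∈ unres p := mem_unres.2 hnone
      have := Finset.card_pos.2 ⟨i, this⟩
      omega
    have hfull : ∀ i, p i = some ((p i).getD true) := by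
      intro i
      cases hpi : p i with
      | none => exact absurd hpi (hres i)
      | some b => simp
    have : Force A 0 b p := by
      cases b <;>
        exact ⟨fun i => (p i).getD true, hfull, h _ fun i s hs => by simp [hs]⟩
    exact this
  | m + 1, true, p, hm, h => by
    have hpos : 0 < (unres p).card := by omega
    obtain ⟨i, hi⟩ := Finset.card_pos.1 hpos
    have hpi : p i = none := mem_unres.1 hi
    refine ⟨i, hpi, true, force_of_all A m false _ ?_ ?_⟩
    · rw [card_unres_update p i true hpi]; omega
    · intro f hf
      refine h f fun j s hs => hf j s ?_
      have hji : j ≠ i := by rintro rfl; rw [hpi] at hs; cases hs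
      rw [Function.update_of_ne hji]; exact hs
  | m + 1, false, p, hm, h => by
    intro i hpi s
    refine force_of_all A m true _ ?_ ?_
    · rw [card_unres_update p i s hpi]; omega
    · intro f hf
      refine h f fun j s' hs => hf j s' ?_
      have hji : j ≠ i := by rintro rfl; rw [hpi] at hs; cases hs
      rw [Function.update_of_ne hji]; exact hs

section Main
variable {n : ℕ}

def osgn : Option Bool → ℤ
  | some b => sgn b
  | none => 0

def tw (n : ℕ) (i : Fin n) : Fin (n + 2) := Fin.castLE (by omega) i

lemma tw_val (i : Fin n) : (tw n i).val = i.val := rfl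

lemma tw_inj : Function.Injective (tw n) := by
  intro a b h
  exact Fin.ext (by simpa [tw_val] using congrArg Fin.val h)

def psum (n : ℕ) (p : PartialRes (n + 2)) : ℤ := ∑ i : Fin n, osgn (p (tw n i))

lemma psum_update_clasp (p : PartialRes (n + 2)) (j : Fin (n + 2)) (hj : n ≤ j.val) (v : Option Bool) :
    psum n (Function.update p j v) = psum n p := by
  refine Finset.sum_congr rfl fun i _ => ?_
  rw [Function.update_of_ne]
  intro h
  have := congrArg Fin.val h
  rw [tw_val] at this
  omega

lemma psum_update_twist (p : PartialRes (n + 2)) (i0 : Fin n) (h : p (tw n i0) = none) (s : Bool) :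
    psum n (Function.update p (tw n i0) (some s)) = psum n p + sgn s := by
  unfold psum
  rw [← Finset.sum_erase_add _ _ (Finset.mem_univ i0),
      ← Finset.sum_erase_add _ _ (Finset.mem_univ i0)]
  rw [Function.update_self, h]
  have : ∀ i ∈ Finset.univ.erase i0,
      osgn (Function.update p (tw n i0) (some s) (tw n i)) = osgn (p (tw n i)) := by
    intro i hi
    rw [Function.update_of_ne]
    exact fun he => (Finset.mem_erase.1 hi).1 (tw_inj he)
  rw [Finset.sum_congr rfl this]
  simp [osgn]

lemma twistSum_eq (p : PartialRes (n + 2)) (f : Fin (n + 2) → Bool)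
    (hres : ∀ i : Fin n, p (tw n i) ≠ none)
    (hf : ∀ i s, p i = some s → f i = s) :
    twistSum n f = psum n p := by
  refine Finset.sum_congr rfl fun i _ => ?_
  cases hpi : p (tw n i) with
  | none => exact absurd hpi (hres i)
  | some b =>
    have : f (tw n i) = b := hf _ _ hpi
    simp [osgn, tw] at *
    rw [this]

end Main

section Game
variable {n : ℕ}

def cl1 (n : ℕ) : Fin (n + 2) := ⟨n, by omega⟩
def cl2 (n : ℕ) : Fin (n + 2) := ⟨n + 1, by omega⟩

lemma Knotted_iff (f : Fin (n + 2) → Bool) :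
    Knotted n f ↔ f (cl1 n) = f (cl2 n) ∧
      (2 ≤ |twistSum n f| ∨ twistSum n f = sgn (f (cl1 n))) := Iff.rfl

lemma cl1_ne_cl2 : cl1 n ≠ cl2 n := by
  intro h; have := congrArg Fin.val h; simp [cl1, cl2] at this

lemma tw_ne_cl1 (j : Fin n) : tw n j ≠ cl1 n := by
  intro h; have := congrArg Fin.val h; simp [tw_val, cl1] at this; omega

lemma tw_ne_cl2 (j : Fin n) : tw n j ≠ cl2 n := by
  intro h; have := congrArg Fin.val h; simp [tw_val, cl2] at this; omega

lemma main_lemma (n : ℕ) : ∀ m : ℕ, ∀ p : PartialRes (n + 2), Odd m →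
    m = (unres p).card → p (cl1 n) = none → p (cl2 n) = none → psum n p = 0 →
    Force (fun f => ¬ Knotted n f) m false p := by
  intro m
  induction m using Nat.strong_induction_on with
  | _ m ih =>
  intro p hodd hm hc1 hc2 hps
  obtain ⟨m', rfl⟩ : ∃ m', m = m' + 1 := by
    rcases m with _ | m'
    · exact absurd hodd (by simp)
    · exact ⟨m', rfl⟩
  have hsub : {cl1 n, cl2 n} ⊆ unres p := by
    intro x hx
    rcases Finset.mem_insert.1 hx with rfl | hx
    · exact mem_unres.2 hc1
    · rw [Finset.mem_singleton.1 hx]; exact mem_unres.2 hc2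
  have hcard2 : 2 ≤ (unres p).card := by
    calc 2 = ({cl1 n, cl2 n} : Finset (Fin (n + 2))).card := by
            rw [Finset.card_insert_of_notMem (by simp [cl1_ne_cl2]), Finset.card_singleton]
      _ ≤ (unres p).card := Finset.card_le_card hsub
  have hodd' : (m' + 1) % 2 = 1 := Nat.odd_iff.1 hodd
  obtain ⟨m'', rfl⟩ : ∃ m'', m' = m'' + 1 := by
    rcases m' with _ | m''
    · omega
    · exact ⟨m'', rfl⟩
  show ∀ i, p i = none → ∀ s : Bool,
      Force (fun f => ¬ Knotted n f) (m'' + 1) true (Function.update p i (some s))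
  intro i hpi s
  have htri : i.val < n ∨ i = cl1 n ∨ i = cl2 n := by
    have := i.isLt
    by_cases h1 : i.val < n
    · exact Or.inl h1
    · right
      rcases Nat.lt_or_ge i.val (n + 1) with h2 | h2
      · exact Or.inl (Fin.ext (by simp [cl1]; omega))
      · exact Or.inr (Fin.ext (by simp [cl2]; omega))
  rcases htri with hlt | rfl | rfl
  · -- Lear played a twist crossing
    set i0 : Fin n := ⟨i.val, hlt⟩ with hi0
    have htwi : tw n i0 = i := Fin.ext rfl
    have hic1 : i ≠ cl1 n := htwi ▸ tw_ne_cl1 i0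
    have hic2 : i ≠ cl2 n := htwi ▸ tw_ne_cl2 i0
    set p1 := Function.update p i (some s) with hp1
    have hp1c1 : p1 (cl1 n) = none := by
      rw [hp1, Function.update_of_ne (Ne.symm hic1)]; exact hc1
    have hp1c2 : p1 (cl2 n) = none := by
      rw [hp1, Function.update_of_ne (Ne.symm hic2)]; exact hc2
    have hp1s : psum n p1 = sgn s := by
      rw [hp1, ← htwi, psum_update_twist p i0 (htwi ▸ hpi) s, hps, zero_add]
    have hp1card : (unres p1).card = m'' + 1 := by
      rw [hp1, card_unres_update p i s hpi]; omega
    by_cases hmm : m'' = 1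
    · -- last twist just got resolved; Ursula plays clasp 1 with the opposite sign
      subst hmm
      have hsub3 : ({i, cl1 n, cl2 n} : Finset (Fin (n + 2))) ⊆ unres p := by
        intro x hx
        rcases Finset.mem_insert.1 hx with rfl | hx
        · exact mem_unres.2 hpi
        · exact hsub hx
      have hcard3 : ({i, cl1 n, cl2 n} : Finset (Fin (n + 2))).card = 3 := by
        rw [Finset.card_insert_of_notMem (by simp [hic1, hic2]),
            Finset.card_insert_of_notMem (by simp [cl1_ne_cl2]), Finset.card_singleton]
      have hueq : ({i, cl1 n, cl2 n} : Finset (Fin (n + 2))) = unres p :=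
        Finset.eq_of_subset_of_card_le hsub3 (by omega)
      refine ⟨cl1 n, hp1c1, !s, ?_⟩
      set p2 := Function.update p1 (cl1 n) (some (!s)) with hp2
      refine force_of_all _ 1 false p2 ?_ ?_
      · rw [hp2, card_unres_update p1 (cl1 n) (!s) hp1c1]; omega
      · intro f hf
        have hres : ∀ j : Fin n, p2 (tw n j) ≠ none := by
          intro j
          rw [hp2, Function.update_of_ne (tw_ne_cl1 j)]
          by_cases hji : j = i0
          · subst hji; rw [hp1, htwi, Function.update_self]; simp
          · rw [hp1, Function.update_of_ne (by rw [← htwi]; exact fun h => hji (tw_inj h))]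
            intro hnone
            have hmem : tw n j ∈ unres p := mem_unres.2 hnone
            rw [← hueq] at hmem
            rcases Finset.mem_insert.1 hmem with h | hmem
            · exact hji (tw_inj (h.trans htwi.symm))
            · rcases Finset.mem_insert.1 hmem with h | h
              · exact tw_ne_cl1 j h
              · exact tw_ne_cl2 j (Finset.mem_singleton.1 h)
        have hp2s : psum n p2 = sgn s := by
          rw [hp2, psum_update_clasp p1 (cl1 n) (by simp [cl1]) _, hp1s]
        have hts : twistSum n f = sgn s := (twistSum_eq p2 f hres hf).trans hp2s
        have hfc1 : f (cl1 n) = !s := hf _ _ (by rw [hp2, Function.update_self])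
        rw [Knotted_iff]
        rintro ⟨-, h2 | h2⟩
        · rw [hts] at h2; cases s <;> simp [sgn] at h2
        · rw [hts, hfc1] at h2; cases s <;> simp [sgn] at h2
    · -- another unresolved twist exists; Ursula mirrors with the opposite sign
      have hm4 : 3 ≤ m'' := by omega
      have : ∃ j ∈ unres p, j ∉ ({i, cl1 n, cl2 n} : Finset (Fin (n + 2))) := by
        by_contra hcon
        push_neg at hcon
        have hsub' : unres p ⊆ {i, cl1 n, cl2 n} := fun x hx => hcon x hx
        have hle := Finset.card_le_card hsub'
        have h3 : ({i, cl1 n, cl2 n} : Finset (Fin (n + 2))).card ≤ 3 := by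
          apply (Finset.card_insert_le _ _).trans
          have := Finset.card_insert_le (cl1 n) ({cl2 n} : Finset (Fin (n + 2)))
          simp at this ⊢
          omega
        omega
      obtain ⟨j, hj, hjn⟩ := this
      simp only [Finset.mem_insert, Finset.mem_singleton, not_or] at hjn
      obtain ⟨hji, hjc1, hjc2⟩ := hjn
      have hjlt : j.val < n := by
        have := j.isLt
        have h1 : j.val ≠ n := fun h => hjc1 (Fin.ext (by simpa [cl1] using h))
        have h2 : j.val ≠ n + 1 := fun h => hjc2 (Fin.ext (by simpa [cl2] using h))
        omega
      set j0 : Fin n := ⟨j.val, hjlt⟩ with hj0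
      have htwj : tw n j0 = j := Fin.ext rfl
      have hp1j : p1 j = none := by
        rw [hp1, Function.update_of_ne hji]; exact mem_unres.1 hj
      refine ⟨j, hp1j, !s, ?_⟩
      set p2 := Function.update p1 j (some (!s)) with hp2
      refine ih m'' (by omega) p2 ?_ ?_ ?_ ?_ ?_
      · rw [Nat.odd_iff]; omega
      · rw [hp2, card_unres_update p1 j (!s) hp1j]; omega
      · rw [hp2, Function.update_of_ne (Ne.symm hjc1)]; exact hp1c1
      · rw [hp2, Function.update_of_ne (Ne.symm hjc2)]; exact hp1c2
      · rw [hp2, ← htwj, psum_update_twist p1 j0 (htwj ▸ hp1j) (!s), hp1s]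
        cases s <;> simp [sgn]
  · -- Lear played clasp 1; Ursula answers on clasp 2 with the opposite sign
    set p1 := Function.update p (cl1 n) (some s) with hp1
    have hp1c2 : p1 (cl2 n) = none := by
      rw [hp1, Function.update_of_ne (Ne.symm cl1_ne_cl2)]; exact hc2
    refine ⟨cl2 n, hp1c2, !s, ?_⟩
    set p2 := Function.update p1 (cl2 n) (some (!s)) with hp2
    refine force_of_all _ m'' false p2 ?_ ?_
    · rw [hp2, card_unres_update p1 (cl2 n) (!s) hp1c2, hp1, card_unres_update p (cl1 n) s hpi]
      omega
    · intro f hf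
      have hfc1 : f (cl1 n) = s := by
        refine hf _ _ ?_
        rw [hp2, Function.update_of_ne cl1_ne_cl2, hp1, Function.update_self]
      have hfc2 : f (cl2 n) = !s := hf _ _ (by rw [hp2, Function.update_self])
      rw [Knotted_iff]
      rintro ⟨h1, -⟩
      rw [hfc1, hfc2] at h1
      cases s <;> simp at h1
  · -- Lear played clasp 2; symmetric
    set p1 := Function.update p (cl2 n) (some s) with hp1
    have hp1c1 : p1 (cl1 n) = none := by
      rw [hp1, Function.update_of_ne cl1_ne_cl2]; exact hc1
    refine ⟨cl1 n, hp1c1, !s, ?_⟩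
    set p2 := Function.update p1 (cl1 n) (some (!s)) with hp2
    refine force_of_all _ m'' false p2 ?_ ?_
    · rw [hp2, card_unres_update p1 (cl1 n) (!s) hp1c1, hp1, card_unres_update p (cl2 n) s hpi]
      omega
    · intro f hf
      have hfc2 : f (cl2 n) = s := by
        refine hf _ _ ?_
        rw [hp2, Function.update_of_ne (Ne.symm cl1_ne_cl2), hp1, Function.update_self]
      have hfc1 : f (cl1 n) = !s := hf _ _ (by rw [hp2, Function.update_self])
      rw [Knotted_iff]
      rintro ⟨h1, -⟩
      rw [hfc1, hfc2] at h1
      cases s <;> simp at h1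

end Game

/-- TKNTK with an odd number `n` of twist precrossings:
Ursula (goal: unknotted) has a winning strategy moving second. -/
theorem tkntk_odd_ursula_second_wins (n : ℕ) (hn : Odd n) :
    Force (fun f => ¬ Knotted n f) (n + 2) false (emptyRes (n + 2)) := by
  apply main_lemma n (n + 2) (emptyRes (n + 2))
  · obtain ⟨t, rfl⟩ := hn; exact ⟨t + 1, by ring⟩
  · simp [unres, emptyRes]
  · rfl
  · rfl
  · simp [psum, emptyRes, osgn]
end

section
/- In the twist-knot game TKNTK with n twist precrossings, King Lear (who wins if the final resolution is knotted) has a winning strategy if and only if n is even and King Lear plays second. -/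
namespace TK

variable {n : ℕ}

def twi (n : ℕ) (i : Fin n) : Fin (n + 2) := ⟨i.val, by omega⟩
def cA (n : ℕ) : Fin (n + 2) := ⟨n, by omega⟩
def cB (n : ℕ) : Fin (n + 2) := ⟨n + 1, by omega⟩

def pT (p : PartialRes (n + 2)) : ℤ := ∑ i : Fin n, (p (twi n i)).elim 0 sgn
def uset (p : PartialRes (n + 2)) : Finset (Fin (n + 2)) :=
  Finset.univ.filter (fun i => p i = none)
def tset (p : PartialRes (n + 2)) : Finset (Fin n) :=
  Finset.univ.filter (fun i => p (twi n i) = none)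

lemma twi_inj {i j : Fin n} (h : twi n i = twi n j) : i = j := by
  simpa [twi, Fin.ext_iff] using h

lemma twi_ne_cA (i : Fin n) : twi n i ≠ cA n := by
  intro h
  have h2 := congrArg Fin.val h
  have h3 := i.2
  simp only [twi, cA] at h2
  omega

lemma twi_ne_cB (i : Fin n) : twi n i ≠ cB n := by
  intro h
  have h2 := congrArg Fin.val h
  have h3 := i.2
  simp only [twi, cB] at h2
  omega

lemma cA_ne_cB : cA n ≠ cB n := by simp [cA, cB, Fin.ext_iff]

lemma index_cases (j : Fin (n + 2)) :
    (∃ i : Fin n, j = twi n i) ∨ j = cA n ∨ j = cB n := by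
  rcases lt_trichotomy j.val n with h | h | h
  · exact Or.inl ⟨⟨j.val, h⟩, by simp [twi, Fin.ext_iff]⟩
  · exact Or.inr (Or.inl (by simp [cA, Fin.ext_iff, h]))
  · exact Or.inr (Or.inr (by simp only [cB, Fin.ext_iff]; omega))

lemma mem_uset {p : PartialRes (n + 2)} {i} : i ∈ uset p ↔ p i = none := by
  simp [uset]

lemma mem_tset {p : PartialRes (n + 2)} {i} : i ∈ tset p ↔ p (twi n i) = none := by
  simp [tset]

lemma uset_update {p : PartialRes (n + 2)} {i} (hi : p i = none) (s : Bool) :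
    uset (Function.update p i (some s)) = (uset p).erase i := by
  ext j
  by_cases h : j = i <;>
    simp [mem_uset, Finset.mem_erase, Function.update_apply, h, hi]

lemma ucard_update {p : PartialRes (n + 2)} {i} (hi : p i = none) (s : Bool) :
    (uset (Function.update p i (some s))).card + 1 = (uset p).card := by
  rw [uset_update hi s]
  exact Finset.card_erase_add_one (mem_uset.mpr hi)

lemma tset_update_twist {p : PartialRes (n + 2)} {i : Fin n} (s : Bool) :
    tset (Function.update p (twi n i) (some s)) = (tset p).erase i := by
  ext j
  by_cases h : j = i
  · subst h; simp [mem_tset, Function.update_apply]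
  · have : twi n j ≠ twi n i := fun hh => h (twi_inj hh)
    simp [mem_tset, Finset.mem_erase, Function.update_of_ne this, h]

lemma tset_update_clasp {p : PartialRes (n + 2)} {j : Fin (n + 2)} (hj : n ≤ j.val)
    (v : Option Bool) : tset (Function.update p j v) = tset p := by
  ext i
  have : twi n i ≠ j := by
    intro h; have h2 := congrArg Fin.val h; have h3 := i.2; simp only [twi] at h2; omega
  simp [mem_tset, Function.update_of_ne this]

lemma pT_update_clasp {p : PartialRes (n + 2)} {j : Fin (n + 2)} (hj : n ≤ j.val)
    (v : Option Bool) : pT (Function.update p j v) = pT p := by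
  unfold pT
  refine Finset.sum_congr rfl fun i _ => ?_
  have : twi n i ≠ j := by
    intro h; have h2 := congrArg Fin.val h; have h3 := i.2; simp only [twi] at h2; omega
  rw [Function.update_of_ne this]

lemma pT_update_twist {p : PartialRes (n + 2)} {i : Fin n} (hi : p (twi n i) = none)
    (s : Bool) : pT (Function.update p (twi n i) (some s)) = pT p + sgn s := by
  unfold pT
  have hfun : (fun j : Fin n => ((Function.update p (twi n i) (some s)) (twi n j)).elim 0 sgn)
      = Function.update (fun j : Fin n => (p (twi n j)).elim 0 sgn) i (sgn s) := by
    funext j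
    by_cases h : j = i
    · subst h; simp [Function.update_self]
    · have : twi n j ≠ twi n i := fun hh => h (twi_inj hh)
      simp [Function.update_of_ne this, Function.update_of_ne h]
  set g := fun j : Fin n => (p (twi n j)).elim 0 sgn with hgdef
  have hg : g = Function.update g i 0 := by
    funext j
    by_cases h : j = i
    · subst h; simp [hgdef, hi]
    · simp [Function.update_of_ne h]
  rw [hfun, Finset.sum_update_of_mem (Finset.mem_univ i)]
  have h4 : ∑ j : Fin n, g j = 0 + ∑ j ∈ Finset.univ \ {i}, g j := by
    conv_lhs => rw [hg]
    rw [Finset.sum_update_of_mem (Finset.mem_univ i)]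
  rw [h4]; ring

lemma all_some {p : PartialRes (n + 2)} (h : (uset p).card = 0) (i : Fin (n + 2)) :
    ∃ b, p i = some b := by
  have : i ∉ uset p := by
    rw [Finset.card_eq_zero] at h; simp [h]
  rw [mem_uset] at this
  cases hpi : p i
  · exact absurd hpi this
  · exact ⟨_, rfl⟩

lemma twistSum_compat {p : PartialRes (n + 2)} {f : Fin (n + 2) → Bool}
    (hf : ∀ i, p i = some (f i)) : twistSum n f = pT p := by
  unfold twistSum pT
  refine Finset.sum_congr rfl fun i _ => ?_
  have h1 : Fin.castLE (by omega : n ≤ n + 2) i = twi n i := rfl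
  rw [h1, hf (twi n i)]
  rfl

lemma sgn_vals (s : Bool) : sgn s = 1 ∨ sgn s = -1 := by cases s <;> simp [sgn]

lemma sgn_not (s : Bool) : sgn (!s) = -sgn s := by cases s <;> simp [sgn]


lemma lear : ∀ m : ℕ, Even m → ∀ p : PartialRes (n + 2),
    (uset p).card = m → p (cA n) = p (cB n) → 2 ∣ pT p → Even (tset p).card →
    ((tset p).card = 0 → pT p ≠ 0) → Force (Knotted n) m false p := by
  intro m
  induction m using Nat.strong_induction_on with
  | _ m ih =>
    match m with
    | 0 =>
      intro _ p hc hcl hT ht h0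
      have hall := all_some hc
      choose f hf using hall
      refine ⟨f, hf, ?_, ?_⟩
      · have h1 := hf (cA n); have h2 := hf (cB n)
        rw [h1, h2] at hcl
        exact Option.some_injective _ hcl
      · left
        have hts : twistSum n f = pT p := twistSum_compat hf
        have htz : (tset p).card = 0 := by
          by_contra h
          obtain ⟨i, hi⟩ := Finset.card_ne_zero.mp h |>.exists_mem
          have : twi n i ∈ uset p := mem_uset.mpr (mem_tset.mp hi)
          have : (uset p).card ≠ 0 := Finset.card_ne_zero_of_mem this
          omega
        have hne := h0 htz
        rw [hts]
        have : (2 : ℤ) ∣ |pT p| := (dvd_abs 2 (pT p)).mpr hT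
        have hpos : 0 < |pT p| := abs_pos.mpr hne
        exact Int.le_of_dvd hpos this
    | 1 => intro h; exact absurd h (by decide)
    | (k + 2) =>
      intro hm p hc hcl hT ht h0
      intro i hi s
      rcases index_cases i with ⟨it, rfl⟩ | rfl | rfl
      · -- Lear responds on another twist
        have hit : it ∈ tset p := mem_tset.mpr hi
        have h2c : 1 < (tset p).card := by
          have h1 : 0 < (tset p).card := Finset.card_pos.mpr ⟨it, hit⟩
          rcases ht with ⟨c, hc2⟩; omega
        obtain ⟨jt, hjt, hne⟩ := Finset.exists_mem_ne h2c it
        set q := Function.update p (twi n it) (some s) with hq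
        have hqjt : q (twi n jt) = none := by
          rw [hq, Function.update_of_ne (fun h => hne (twi_inj h))]
          exact mem_tset.mp hjt
        set X := pT p + sgn s with hX
        refine ⟨twi n jt, hqjt, decide (0 ≤ X), ?_⟩
        set b := decide (0 ≤ X) with hb
        set q2 := Function.update q (twi n jt) (some b) with hq2
        have hcq2 : (uset q2).card = k := by
          have e1 := ucard_update hi s
          have e2 := ucard_update hqjt b
          rw [← hq] at e1; rw [← hq2] at e2
          omega
        have hpT : pT q2 = X + sgn b := by
          rw [hq2, pT_update_twist hqjt, hq, pT_update_twist hi, hX]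
        have hsb : sgn b = if 0 ≤ X then 1 else -1 := by
          by_cases h : 0 ≤ X <;> simp [hb, h, sgn]
        have hXodd : ¬ (2 ∣ X) := by
          rcases sgn_vals s with h | h <;> rw [hX, h] <;> omega
        have hgood : 2 ∣ pT q2 ∧ pT q2 ≠ 0 := by
          rw [hpT, hsb]
          split_ifs with h <;> constructor <;> omega
        have htq2 : tset q2 = ((tset p).erase it).erase jt := by
          rw [hq2, tset_update_twist, hq, tset_update_twist]
        have htc : (tset q2).card + 2 = (tset p).card := by
          rw [htq2]
          have m1 : jt ∈ (tset p).erase it := Finset.mem_erase.mpr ⟨hne, hjt⟩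
          have e1 := Finset.card_erase_add_one m1
          have e2 := Finset.card_erase_add_one hit
          omega
        have hclq2 : q2 (cA n) = q2 (cB n) := by
          rw [hq2, hq,
            Function.update_of_ne (Ne.symm (twi_ne_cA jt)),
            Function.update_of_ne (Ne.symm (twi_ne_cA it)),
            Function.update_of_ne (Ne.symm (twi_ne_cB jt)),
            Function.update_of_ne (Ne.symm (twi_ne_cB it))]
          exact hcl
        refine ih k (by omega) (by rcases hm with ⟨c, hc2⟩; exact ⟨c - 1, by omega⟩)
          q2 hcq2 hclq2 hgood.1 ?_ (fun _ => hgood.2)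
        · rcases ht with ⟨c, hc2⟩; exact ⟨c - 1, by omega⟩
      · -- Ursula played clasp A; Lear copies on clasp B
        set q := Function.update p (cA n) (some s) with hq
        have hpB : p (cB n) = none := by rw [← hcl]; exact hi
        have hqB : q (cB n) = none := by
          rw [hq, Function.update_of_ne (Ne.symm cA_ne_cB)]; exact hpB
        refine ⟨cB n, hqB, s, ?_⟩
        set q2 := Function.update q (cB n) (some s) with hq2
        have hcq2 : (uset q2).card = k := by
          have e1 := ucard_update hi s
          have e2 := ucard_update hqB s
          rw [← hq] at e1; rw [← hq2] at e2
          omega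
        have hpT : pT q2 = pT p := by
          rw [hq2, pT_update_clasp (by simp [cB]), hq, pT_update_clasp (by simp [cA])]
        have htq2 : tset q2 = tset p := by
          rw [hq2, tset_update_clasp (by simp [cB]), hq, tset_update_clasp (by simp [cA])]
        have hclq2 : q2 (cA n) = q2 (cB n) := by
          rw [hq2, Function.update_self, Function.update_of_ne cA_ne_cB, hq,
            Function.update_self]
        refine ih k (by omega) (by rcases hm with ⟨c, hc2⟩; exact ⟨c - 1, by omega⟩)
          q2 hcq2 hclq2 (by rw [hpT]; exact hT) (by rw [htq2]; exact ht)
          (by rw [htq2, hpT]; exact h0)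
      · -- Ursula played clasp B; Lear copies on clasp A
        set q := Function.update p (cB n) (some s) with hq
        have hpA : p (cA n) = none := by rw [hcl]; exact hi
        have hqA : q (cA n) = none := by
          rw [hq, Function.update_of_ne cA_ne_cB]; exact hpA
        refine ⟨cA n, hqA, s, ?_⟩
        set q2 := Function.update q (cA n) (some s) with hq2
        have hcq2 : (uset q2).card = k := by
          have e1 := ucard_update hi s
          have e2 := ucard_update hqA s
          rw [← hq] at e1; rw [← hq2] at e2
          omega
        have hpT : pT q2 = pT p := by
          rw [hq2, pT_update_clasp (by simp [cA]), hq, pT_update_clasp (by simp [cB])]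
        have htq2 : tset q2 = tset p := by
          rw [hq2, tset_update_clasp (by simp [cA]), hq, tset_update_clasp (by simp [cB])]
        have hclq2 : q2 (cA n) = q2 (cB n) := by
          rw [hq2, Function.update_self, Function.update_of_ne (Ne.symm cA_ne_cB), hq,
            Function.update_self]
        refine ih k (by omega) (by rcases hm with ⟨c, hc2⟩; exact ⟨c - 1, by omega⟩)
          q2 hcq2 hclq2 (by rw [hpT]; exact hT) (by rw [htq2]; exact ht)
          (by rw [htq2, hpT]; exact h0)


def Won (p : PartialRes (n + 2)) : Prop :=
  ∃ b, p (cA n) = some b ∧ p (cB n) = some (!b)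

def Bal (m : ℕ) (p : PartialRes (n + 2)) : Prop :=
  p (cA n) = none ∧ p (cB n) = none ∧ (Even (tset p).card ↔ Even m) ∧
    (¬ Even m → pT p = 0)

def W3 (p : PartialRes (n + 2)) : Prop :=
  ∃ b, p (cA n) = some b ∧ p (cB n) = none ∧ pT p = sgn (!b)

lemma ursula : ∀ m : ℕ, ∀ p : PartialRes (n + 2), (uset p).card = m →
    (Won p ∨ Bal m p ∨ (m = 1 ∧ W3 p)) → ¬ Force (Knotted n) m true p := by
  intro m
  induction m using Nat.strong_induction_on with
  | _ m ih =>
    match m with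
    | 0 =>
      rintro p hc hW ⟨f, hf, hk1, _⟩
      rcases hW with ⟨b, hbA, hbB⟩ | ⟨hA, _, _, _⟩ | ⟨h1, _⟩
      · rw [hf (cA n)] at hbA; rw [hf (cB n)] at hbB
        have e1 : f (cA n) = b := Option.some_injective _ hbA
        have e2 : f (cB n) = !b := Option.some_injective _ hbB
        have : f (cA n) = f (cB n) := hk1
        rw [e1, e2] at this
        simp at this
      · rw [hf (cA n)] at hA; exact nomatch hA
      · exact Nat.noConfusion h1
    | 1 =>
      rintro p hc hW ⟨i, hi, s, f, hf, hk1, hk2⟩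
      rcases hW with ⟨b, hbA, hbB⟩ | ⟨hA, hB, _, _⟩ | ⟨_, b, hbA, hbB, hT⟩
      · have hiA : i ≠ cA n := fun h => by rw [h, hbA] at hi; exact nomatch hi
        have hiB : i ≠ cB n := fun h => by rw [h, hbB] at hi; exact nomatch hi
        have e1 := hf (cA n); have e2 := hf (cB n)
        rw [Function.update_of_ne (Ne.symm hiA), hbA] at e1
        rw [Function.update_of_ne (Ne.symm hiB), hbB] at e2
        have e1' : f (cA n) = b := (Option.some_injective _ e1).symm
        have e2' : f (cB n) = !b := (Option.some_injective _ e2).symm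
        have : f (cA n) = f (cB n) := hk1
        rw [e1', e2'] at this
        simp at this
      · by_cases h : i = cA n
        · subst h
          have e2 := hf (cB n)
          rw [Function.update_of_ne (Ne.symm cA_ne_cB), hB] at e2
          exact nomatch e2
        · have e1 := hf (cA n)
          rw [Function.update_of_ne (Ne.symm h), hA] at e1
          exact nomatch e1
      · have hiA : i ≠ cA n := fun h => by rw [h, hbA] at hi; exact nomatch hi
        have hiT : ∀ j : Fin n, i ≠ twi n j := by
          intro j h
          -- p (twi n j) must be some since uset p = {cB n}... derive via card
          have husetB : cB n ∈ uset p := mem_uset.mpr hbB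
          have husetI : i ∈ uset p := mem_uset.mpr hi
          have hIB : i = cB n := by
            by_contra hne
            have h2 : 1 < (uset p).card := Finset.one_lt_card.mpr ⟨i, husetI, cB n, husetB, hne⟩
            omega
          rw [hIB] at h
          exact twi_ne_cB j h.symm
        have hIB : i = cB n := by
          rcases index_cases i with ⟨j, rfl⟩ | h | h
          · exact absurd rfl (hiT j)
          · exact absurd h hiA
          · exact h
        subst hIB
        have e1 := hf (cA n)
        rw [Function.update_of_ne cA_ne_cB, hbA] at e1
        have e1' : f (cA n) = b := (Option.some_injective _ e1).symm
        have hts : twistSum n f = pT p := by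
          rw [twistSum_compat hf, pT_update_clasp (by simp [cB])]
        have hcb : f (cB n) = s := by
          have := hf (cB n); rw [Function.update_self] at this
          exact (Option.some_injective _ this).symm
        have hk1' : b = s := by
          have : f (cA n) = f (cB n) := hk1
          rw [e1', hcb] at this; exact this
        rw [hts, hT] at hk2
        have h1 : f (⟨n, by omega⟩ : Fin (n + 2)) = b := e1'
        rcases hk2 with h | h
        · rcases b <;> simp [sgn] at h
        · rw [h1] at h
          rcases b <;> simp [sgn] at h
    | (k + 2) =>
      rintro p hc hW ⟨i, hi, s, hFs⟩
      set q := Function.update p (i) (some s) with hq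
      have hcq : (uset q).card = k + 1 := by
        have := ucard_update hi s; rw [← hq] at this; omega
      rcases hW with ⟨b, hbA, hbB⟩ | ⟨hA, hB, hpar, hT0⟩ | ⟨h1, _⟩
      · -- Won: respond anywhere
        have hne : (uset q).Nonempty := Finset.card_pos.mp (by omega)
        obtain ⟨j, hj⟩ := hne
        have hqj : q j = none := mem_uset.mp hj
        have hFk := hFs j hqj true
        set q2 := Function.update q j (some true) with hq2
        have hiA : i ≠ cA n := fun h => by rw [h, hbA] at hi; exact nomatch hi
        have hiB : i ≠ cB n := fun h => by rw [h, hbB] at hi; exact nomatch hi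
        have hjA : j ≠ cA n := fun h => by
          rw [h, hq, Function.update_of_ne (Ne.symm hiA), hbA] at hqj
          exact nomatch hqj
        have hjB : j ≠ cB n := fun h => by
          rw [h, hq, Function.update_of_ne (Ne.symm hiB), hbB] at hqj
          exact nomatch hqj
        refine ih k (by omega) q2 ?_ (Or.inl ⟨b, ?_, ?_⟩) hFk
        · have := ucard_update hqj true; rw [← hq2] at this; omega
        · rw [hq2, Function.update_of_ne (Ne.symm hjA), hq,
            Function.update_of_ne (Ne.symm hiA)]; exact hbA
        · rw [hq2, Function.update_of_ne (Ne.symm hjB), hq,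
            Function.update_of_ne (Ne.symm hiB)]; exact hbB
      · -- Balanced
        rcases index_cases i with ⟨it, rfl⟩ | rfl | rfl
        · -- Lear played a twist
          have hit : it ∈ tset p := mem_tset.mpr hi
          by_cases hex : ∃ jt ∈ tset p, jt ≠ it
          · obtain ⟨jt, hjt, hne⟩ := hex
            have hqjt : q (twi n jt) = none := by
              rw [hq, Function.update_of_ne (fun h => hne (twi_inj h))]
              exact mem_tset.mp hjt
            have hFk := hFs (twi n jt) hqjt (!s)
            set q2 := Function.update q (twi n jt) (some (!s)) with hq2
            refine ih k (by omega) q2 ?_ (Or.inr (Or.inl ⟨?_, ?_, ?_, ?_⟩)) hFk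
            · have := ucard_update hqjt (!s); rw [← hq2] at this; omega
            · rw [hq2, Function.update_of_ne (Ne.symm (twi_ne_cA jt)), hq,
                Function.update_of_ne (Ne.symm (twi_ne_cA it))]; exact hA
            · rw [hq2, Function.update_of_ne (Ne.symm (twi_ne_cB jt)), hq,
                Function.update_of_ne (Ne.symm (twi_ne_cB it))]; exact hB
            · have htq2 : tset q2 = ((tset p).erase it).erase jt := by
                rw [hq2, tset_update_twist, hq, tset_update_twist]
              have m1 : jt ∈ (tset p).erase it := Finset.mem_erase.mpr ⟨hne, hjt⟩
              have e1 := Finset.card_erase_add_one m1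
              have e2 := Finset.card_erase_add_one hit
              rw [htq2]
              constructor
              · intro h; rcases h with ⟨c, hc2⟩
                rcases hpar.mp ⟨c + 1, by omega⟩ with ⟨d, hd⟩
                exact ⟨d - 1, by omega⟩
              · intro h; rcases h with ⟨c, hc2⟩
                rcases hpar.mpr ⟨c + 1, by omega⟩ with ⟨d, hd⟩
                exact ⟨d - 1, by omega⟩
            · intro hodd
              have hpTq2 : pT q2 = pT p + sgn s + sgn (!s) := by
                rw [hq2, pT_update_twist hqjt, hq, pT_update_twist hi]
              have hT0' : pT p = 0 := hT0 (by
                intro ⟨c, hc2⟩; exact hodd ⟨c - 1, by omega⟩)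
              rw [hpTq2, hT0', sgn_not]; ring
          · -- lone twist: Ursula claims clasp A
            push_neg at hex
            have htone : tset p = {it} := by
              ext jt
              simp only [Finset.mem_singleton]
              constructor
              · intro h; exact hex jt h
              · intro h; rw [h]; exact hit
            have hqA : q (cA n) = none := by
              rw [hq, Function.update_of_ne (Ne.symm (twi_ne_cA it))]; exact hA
            have hFk := hFs (cA n) hqA (!s)
            set q2 := Function.update q (cA n) (some (!s)) with hq2
            have hcq2 : (uset q2).card = k := by
              have := ucard_update hqA (!s); rw [← hq2] at this; omega
            have husetq2 : uset q2 = {cB n} := by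
              ext jj
              simp only [Finset.mem_singleton, mem_uset]
              constructor
              · intro h
                rcases index_cases jj with ⟨j2, rfl⟩ | rfl | rfl
                · exfalso
                  rw [hq2, Function.update_of_ne (twi_ne_cA j2), hq] at h
                  by_cases hji : j2 = it
                  · subst hji; rw [Function.update_self] at h; exact nomatch h
                  · rw [Function.update_of_ne (fun hh => hji (twi_inj hh))] at h
                    have : j2 ∈ tset p := mem_tset.mpr h
                    rw [htone, Finset.mem_singleton] at this
                    exact hji this
                · exfalso
                  rw [hq2, Function.update_self] at h
                  exact nomatch h
                · rfl
              · intro h; subst h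
                rw [hq2, Function.update_of_ne (Ne.symm cA_ne_cB), hq,
                  Function.update_of_ne (Ne.symm (twi_ne_cB it))]
                exact hB
            have hk1 : k = 1 := by
              rw [husetq2] at hcq2
              simpa using hcq2.symm
            have hTz : pT p = 0 := by
              apply hT0
              intro hev
              rw [← hpar, htone] at hev
              simp at hev
            refine ih k (by omega) q2 hcq2 (Or.inr (Or.inr ⟨hk1, !s, ?_, ?_, ?_⟩)) hFk
            · rw [hq2, Function.update_self]
            · rw [hq2, Function.update_of_ne (Ne.symm cA_ne_cB), hq,
                Function.update_of_ne (Ne.symm (twi_ne_cB it))]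
              exact hB
            · rw [hq2, pT_update_clasp (by simp [cA]), hq, pT_update_twist hi, hTz,
                Bool.not_not]
              ring
        · -- Lear played clasp A: respond on clasp B with !s
          have hqB : q (cB n) = none := by
            rw [hq, Function.update_of_ne (Ne.symm cA_ne_cB)]; exact hB
          have hFk := hFs (cB n) hqB (!s)
          set q2 := Function.update q (cB n) (some (!s)) with hq2
          refine ih k (by omega) q2 ?_ (Or.inl ⟨s, ?_, ?_⟩) hFk
          · have := ucard_update hqB (!s); rw [← hq2] at this; omega
          · rw [hq2, Function.update_of_ne cA_ne_cB, hq, Function.update_self]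
          · rw [hq2, Function.update_self]
        · -- Lear played clasp B: respond on clasp A with !s
          have hqA : q (cA n) = none := by
            rw [hq, Function.update_of_ne cA_ne_cB]; exact hA
          have hFk := hFs (cA n) hqA (!s)
          set q2 := Function.update q (cA n) (some (!s)) with hq2
          refine ih k (by omega) q2 ?_ (Or.inl ⟨!s, ?_, ?_⟩) hFk
          · have := ucard_update hqA (!s); rw [← hq2] at this; omega
          · rw [hq2, Function.update_self]
          · rw [hq2, Function.update_of_ne (Ne.symm cA_ne_cB), hq, Function.update_self,
              Bool.not_not]
      · omega


lemma uset_empty_card : (uset (emptyRes (n + 2))).card = n + 2 := by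
  simp [uset, emptyRes]

lemma tset_empty_card : (tset (emptyRes (n + 2))).card = n := by
  simp [tset, emptyRes]

lemma pT_empty : pT (emptyRes (n + 2)) = 0 := by
  simp [pT, emptyRes]

end TK

open TK

/-- TKNTK on a twist-knot shadow with `n` twist precrossings: King Lear (goal: knotted)
has a winning strategy iff `n` is even and King Lear plays second.  Here `learFirst = true`
means King Lear makes the first move. -/
theorem tkntk_lear_wins_iff (n : ℕ) (hn1 : 1 ≤ n) (learFirst : Bool) :
    Force (Knotted n) (n + 2) learFirst (emptyRes (n + 2)) ↔
      Even n ∧ learFirst = false := by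
  constructor
  · intro hF
    cases learFirst with
    | true =>
      exfalso
      refine ursula (n + 2) (emptyRes (n + 2)) uset_empty_card
        (Or.inr (Or.inl ⟨rfl, rfl, ?_, fun _ => pT_empty⟩)) hF
      rw [tset_empty_card]
      exact ⟨fun ⟨c, h⟩ => ⟨c + 1, by omega⟩, fun ⟨c, h⟩ => ⟨c - 1, by omega⟩⟩
    | false =>
      refine ⟨?_, rfl⟩
      by_contra hodd
      have hF2 := hF (twi n ⟨0, hn1⟩) rfl true
      have hcq : (uset (Function.update (emptyRes (n + 2)) (twi n ⟨0, hn1⟩)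
          (some true))).card = n + 1 := by
        have h2 := ucard_update (p := emptyRes (n + 2)) (i := twi n ⟨0, hn1⟩) rfl true
        rw [uset_empty_card] at h2
        omega
      have htq : (tset (Function.update (emptyRes (n + 2)) (twi n ⟨0, hn1⟩)
          (some true))).card + 1 = n := by
        rw [tset_update_twist]
        have h2 := Finset.card_erase_add_one
          (mem_tset.mpr (show emptyRes (n + 2) (twi n ⟨0, hn1⟩) = none from rfl))
        rw [tset_empty_card] at h2
        exact h2
      rcases Nat.even_or_odd n with he | ⟨c, hc2⟩
      · exact hodd he
      refine ursula (n + 1) _ hcq (Or.inr (Or.inl ⟨?_, ?_, ?_, ?_⟩)) hF2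
      · rw [Function.update_of_ne (Ne.symm (twi_ne_cA ⟨0, hn1⟩))]; rfl
      · rw [Function.update_of_ne (Ne.symm (twi_ne_cB ⟨0, hn1⟩))]; rfl
      · have e1 : Even ((tset (Function.update (emptyRes (n + 2)) (twi n ⟨0, hn1⟩)
            (some true))).card) := ⟨c, by omega⟩
        have e2 : Even (n + 1) := ⟨c + 1, by omega⟩
        exact iff_of_true e1 e2
      · intro h
        exact absurd ⟨c + 1, by omega⟩ h
  · rintro ⟨hev, hlf⟩
    subst hlf
    refine lear (n + 2) ?_ (emptyRes (n + 2)) uset_empty_card rfl ?_ ?_ ?_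
    · rcases hev with ⟨c, h⟩; exact ⟨c + 1, by omega⟩
    · rw [pT_empty]; exact dvd_zero 2
    · rw [tset_empty_card]; exact hev
    · rw [tset_empty_card]; intro h; omega
end

section
/- Adding a free extra move converts a second-player win into a first-player win: let G be a finite alternating game with binary outcome in which the second player has a winning strategy. Let G' be the game whose move set is that of G together with one new distinguished move d which may be played at most once during the game (and which has no effect on the outcome: the outcome of a play of G' is the outcome in G of the play with all occurrences of d deleted, where a play of G' consists of one more move than a play of G). Then the first player has a winning strategy in G': namely, play d first and thereafter follow the second-player winning strategy for G. -/
/-- The play of length `m` arising when the first player follows strategy `σ`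
(moving at positions `0, 2, 4, …`) and the second follows `τ` (positions `1, 3, 5, …`);
each strategy maps the current history to the next move. -/
def play {M : Type*} (σ τ : List M → M) : ℕ → List M
  | 0 => []
  | m + 1 =>
      let l := play σ τ m
      l ++ [if l.length % 2 = 0 then σ l else τ l]

theorem play_length {M : Type*} (σ τ : List M → M) (m : ℕ) : (play σ τ m).length = m := by
  induction m with
  | zero => rfl
  | succ n ih => simp [play, ih]

/-- Adding one free extra move `d` (encoded as `none : Option M`, playable at most once per
play and deleted before evaluating the outcome) converts a second-player win into a
first-player win: if the designated player wins the length-`k` game with winning set `W`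
moving second, then in the length-`(k+1)` game over `Option M` the designated player has a
first-player strategy that never replays `d`, and against any opponent who respects the
at-most-one-`d` rule, the resulting play contains `d` exactly once and its `d`-deletion
lies in `W`. -/
theorem extra_move_second_to_first (M : Type*) [Nonempty M] (k : ℕ) (W : Set (List M))
    (h : ∃ τ : List M → M, ∀ σ : List M → M, play σ τ k ∈ W) :
    ∃ σ' : List (Option M) → Option M,
      (∀ l : List (Option M), none ∈ l → σ' l ≠ none) ∧
      ∀ τ' : List (Option M) → Option M, (∀ l, none ∈ l → τ' l ≠ none) →
        (play σ' τ' (k + 1)).countP (·.isNone) = 1 ∧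
          (play σ' τ' (k + 1)).filterMap id ∈ W := by
  classical
  inhabit M
  obtain ⟨τ, hτ⟩ := h
  set σ' : List (Option M) → Option M :=
    fun l => if l = [] then none else some (τ (l.filterMap id)) with hσ'
  refine ⟨σ', ?_, ?_⟩
  · intro l hl
    have hne : l ≠ [] := by rintro rfl; simp at hl
    simp [hσ', hne]
  · intro τ' hτ'
    set σ : List M → M := fun p => (τ' (none :: p.map some)).getD default with hσ
    have key : ∀ m, play σ' τ' (m + 1) = none :: (play σ τ m).map some := by
      intro m
      induction m with
      | zero => simp [play, hσ']
      | succ n ih =>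
        have step : play σ' τ' (n + 1 + 1) =
            play σ' τ' (n + 1) ++
              [if (play σ' τ' (n + 1)).length % 2 = 0 then σ' (play σ' τ' (n + 1))
                else τ' (play σ' τ' (n + 1))] := rfl
        have stepG : play σ τ (n + 1) =
            play σ τ n ++
              [if (play σ τ n).length % 2 = 0 then σ (play σ τ n) else τ (play σ τ n)] := rfl
        set p := play σ τ n with hp
        have hlen : (play σ' τ' (n + 1)).length = n + 1 := by
          rw [ih]; simp [hp, play_length]
        rw [step, ih, stepG]
        have hplen : p.length = n := by rw [hp]; exact play_length σ τ n
        rcases Nat.even_or_odd n with he | ho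
        · -- n even: (n+1) % 2 = 1, opponent τ' moves; in G, σ moves
          have h1 : (none :: p.map some).length % 2 ≠ 0 := by
            simp [hplen, Nat.even_iff.mp he, Nat.add_mod]
          have h2 : p.length % 2 = 0 := by simp [hplen, Nat.even_iff.mp he]
          rw [if_neg h1, if_pos h2]
          have hmem : (none : Option M) ∈ none :: p.map some := List.mem_cons_self
          obtain ⟨a, ha⟩ := Option.ne_none_iff_exists'.mp (hτ' _ hmem)
          simp [hσ, ha]
        · -- n odd: σ' moves; in G, τ moves
          have h1 : (none :: p.map some).length % 2 = 0 := by
            simp [hplen, Nat.odd_iff.mp ho, Nat.add_mod]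
          have h2 : p.length % 2 ≠ 0 := by simp [hplen, Nat.odd_iff.mp ho]
          rw [if_pos h1, if_neg h2]
          simp [hσ', List.filterMap_map]
    rw [key k]
    constructor
    · simp [List.countP_cons, List.countP_map, Function.comp]
    · simpa [List.filterMap_map] using hτ σ
end

section
/- In the twist-knot resolution model, the proportion of knotted full resolutions tends to 1/2 as the number of twist precrossings n tends to infinity. Precisely, if K(n) denotes the number of sign assignments (s_1, ..., s_n, c_1, c_2) ∈ {+1, -1}^{n+2} with c_1 = c_2 and (|s_1 + ... + s_n| ≥ 2 or s_1 + ... + s_n = c_1), then K(n) / 2^{n+2} → 1/2 as n → ∞. -/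
/-- The number of knotted full resolutions of the twist-knot shadow with `n` twist
precrossings. -/
noncomputable def K (n : ℕ) : ℕ := Nat.card {f : Fin (n + 2) → Bool // Knotted n f}

section Aux
open Finset

def Tt (n : ℕ) (g : Fin n → Bool) : ℤ := ∑ i, sgn (g i)

def glue (n : ℕ) (g : Fin n → Bool) (c : Bool) : Fin (n+2) → Bool :=
  fun i => if h : (i : ℕ) < n then g ⟨i, h⟩ else c

lemma glue_cast (n : ℕ) (g : Fin n → Bool) (c : Bool) (i : Fin n) :
    glue n g c (Fin.castLE (by omega) i) = g i := by
  simp only [glue, Fin.castLE]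
  rw [dif_pos i.isLt]

lemma glue_n (n : ℕ) (g : Fin n → Bool) (c : Bool) :
    glue n g c ⟨n, by omega⟩ = c := by
  simp [glue]

lemma glue_n1 (n : ℕ) (g : Fin n → Bool) (c : Bool) :
    glue n g c ⟨n+1, by omega⟩ = c := by
  simp [glue]

lemma twistSum_glue (n : ℕ) (g : Fin n → Bool) (c : Bool) :
    twistSum n (glue n g c) = Tt n g := by
  unfold twistSum Tt
  exact Finset.sum_congr rfl fun i _ => by rw [glue_cast]

def Qpred (n : ℕ) (p : (Fin n → Bool) × Bool) : Prop :=
  2 ≤ |Tt n p.1| ∨ Tt n p.1 = sgn p.2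

instance (n : ℕ) : DecidablePred (Qpred n) := fun p => by unfold Qpred; infer_instance

def resEquiv (n : ℕ) : {f : Fin (n + 2) → Bool // Knotted n f} ≃
    {p : (Fin n → Bool) × Bool // Qpred n p} where
  toFun := fun ⟨f, hf⟩ => ⟨(fun i => f (Fin.castLE (by omega) i), f ⟨n, by omega⟩), hf.2⟩
  invFun := fun ⟨⟨g, c⟩, hq⟩ => ⟨glue n g c, by
    refine ⟨by rw [glue_n, glue_n1], ?_⟩
    rw [twistSum_glue, glue_n]
    exact hq⟩
  left_inv := by
    rintro ⟨f, hf⟩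
    apply Subtype.ext
    funext i
    simp only [glue]
    split
    · next h => congr 1
    · next h =>
      have hi : (i : ℕ) = n ∨ (i : ℕ) = n + 1 := by omega
      rcases hi with hi | hi
      · congr 1; exact Fin.ext hi.symm
      · rw [hf.1]; congr 1; exact Fin.ext hi.symm
  right_inv := by
    rintro ⟨⟨g, c⟩, hq⟩
    apply Subtype.ext
    simp only
    refine Prod.ext ?_ ?_
    · funext i; exact glue_cast n g c i
    · exact glue_n n g c

lemma K_eq (n : ℕ) : K n = (univ.filter fun p : (Fin n → Bool) × Bool => Qpred n p).card := by
  classical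
  rw [K, Nat.card_congr (resEquiv n), Nat.card_eq_fintype_card, Fintype.card_subtype]

lemma K_le (n : ℕ) : K n ≤ 2 ^ (n + 1) := by
  classical
  rw [K_eq]
  calc (univ.filter fun p : (Fin n → Bool) × Bool => Qpred n p).card
      ≤ (univ : Finset ((Fin n → Bool) × Bool)).card := Finset.card_le_card (Finset.filter_subset _ _)
    _ = 2 ^ (n + 1) := by
        simp only [Finset.card_univ, Fintype.card_prod, Fintype.card_fun, Fintype.card_bool,
          Fintype.card_fin]
        ring

lemma K_ge (n : ℕ) :
    2 * (univ.filter fun g : Fin n → Bool => 2 ≤ |Tt n g|).card ≤ K n := by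
  classical
  rw [K_eq]
  have hprod : (univ.filter fun p : (Fin n → Bool) × Bool => 2 ≤ |Tt n p.1|) =
      (univ.filter fun g : Fin n → Bool => 2 ≤ |Tt n g|) ×ˢ (univ : Finset Bool) := by
    ext ⟨g, c⟩
    simp [Finset.mem_product]
  have hsub : (univ.filter fun p : (Fin n → Bool) × Bool => 2 ≤ |Tt n p.1|) ⊆
      (univ.filter fun p : (Fin n → Bool) × Bool => Qpred n p) :=
    Finset.monotone_filter_right _ fun p _ hp => Or.inl hp
  calc 2 * (univ.filter fun g : Fin n → Bool => 2 ≤ |Tt n g|).card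
      = (univ.filter fun p : (Fin n → Bool) × Bool => 2 ≤ |Tt n p.1|).card := by
        rw [hprod, Finset.card_product]
        simp [mul_comm]
    _ ≤ _ := Finset.card_le_card hsub

lemma Tt_eq (n : ℕ) (g : Fin n → Bool) :
    Tt n g = 2 * ((univ.filter fun i => g i = true).card : ℤ) - n := by
  have h : ∀ b, sgn b = 2 * (if b = true then (1:ℤ) else 0) - 1 := by decide
  simp only [Tt, h, Finset.sum_sub_distrib, ← Finset.mul_sum, Finset.sum_boole,
    Finset.sum_const, Finset.card_univ, Fintype.card_fin, nsmul_eq_mul, mul_one]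

lemma count_T_eq (n : ℕ) (v : ℤ) :
    (univ.filter fun g : Fin n → Bool => Tt n g = v).card ≤ Nat.choose n (n/2) := by
  set k := ((n : ℤ) + v).toNat / 2 with hk
  have hinj : Set.InjOn (fun g : Fin n → Bool => univ.filter fun i => g i = true)
      ↑(univ.filter fun g : Fin n → Bool => Tt n g = v) := by
    intro g _ g' _ h
    funext i
    have h2 := Finset.ext_iff.mp h i
    simp only [Finset.mem_filter, Finset.mem_univ, true_and] at h2
    cases hgi : g i <;> cases hgi' : g' i <;> simp_all
  have hmaps : ∀ g ∈ univ.filter fun g : Fin n → Bool => Tt n g = v,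
      (univ.filter fun i => g i = true) ∈ univ.filter fun s : Finset (Fin n) => s.card = k := by
    intro g hg
    simp only [Finset.mem_filter, Finset.mem_univ, true_and] at hg ⊢
    have := Tt_eq n g
    rw [hg] at this
    omega
  calc (univ.filter fun g : Fin n → Bool => Tt n g = v).card
      ≤ (univ.filter fun s : Finset (Fin n) => s.card = k).card :=
        Finset.card_le_card_of_injOn _ hmaps hinj
    _ = Nat.choose n k := by
        rw [← Fintype.card_subtype, Fintype.card_finset_len, Fintype.card_fin]
    _ ≤ Nat.choose n (n/2) := Nat.choose_le_middle k n

lemma count_small (n : ℕ) :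
    (univ.filter fun g : Fin n → Bool => ¬ 2 ≤ |Tt n g|).card ≤ 3 * Nat.choose n (n/2) := by
  have hset : (univ.filter fun g : Fin n → Bool => ¬ 2 ≤ |Tt n g|) =
      univ.filter fun g : Fin n → Bool => Tt n g = -1 ∨ Tt n g = 0 ∨ Tt n g = 1 := by
    apply Finset.filter_congr
    intro g _
    rw [not_le, abs_lt]
    omega
  rw [hset, Finset.filter_or, Finset.filter_or]
  calc _ ≤ (univ.filter fun g : Fin n → Bool => Tt n g = -1).card
        + ((univ.filter fun g : Fin n → Bool => Tt n g = 0) ∪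
           (univ.filter fun g : Fin n → Bool => Tt n g = 1)).card := Finset.card_union_le _ _
    _ ≤ (univ.filter fun g : Fin n → Bool => Tt n g = -1).card
        + ((univ.filter fun g : Fin n → Bool => Tt n g = 0).card
        + (univ.filter fun g : Fin n → Bool => Tt n g = 1).card) := by
          gcongr; exact Finset.card_union_le _ _
    _ ≤ Nat.choose n (n/2) + (Nat.choose n (n/2) + Nat.choose n (n/2)) := by
          gcongr <;> exact count_T_eq n _
    _ = 3 * Nat.choose n (n/2) := by ring


lemma cB_sq (m : ℕ) : (Nat.centralBinom m)^2 * (2*m+1) ≤ 16^m := by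
  induction m with
  | zero => simp [Nat.centralBinom]
  | succ m ih =>
    have hrec := Nat.succ_mul_centralBinom_succ m
    have hsq : ((m+1) * Nat.centralBinom (m+1))^2 = (2*(2*m+1)*Nat.centralBinom m)^2 := by
      rw [hrec]
    have key : (m+1)^2 * ((Nat.centralBinom (m+1))^2 * (2*(m+1)+1)) ≤ (m+1)^2 * 16^(m+1) :=
      calc (m+1)^2 * ((Nat.centralBinom (m+1))^2 * (2*(m+1)+1))
          = ((m+1) * Nat.centralBinom (m+1))^2 * (2*m+3) := by ring
        _ = 4*(2*m+1)*(2*m+3) * ((Nat.centralBinom m)^2 * (2*m+1)) := by rw [hsq]; ring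
        _ ≤ 4*(2*m+1)*(2*m+3) * 16^m := Nat.mul_le_mul_left _ ih
        _ ≤ (m+1)^2 * 16^(m+1) := by
            have h : 4*(2*m+1)*(2*m+3) ≤ (m+1)^2 * 16 := by nlinarith
            calc 4*(2*m+1)*(2*m+3) * 16^m ≤ ((m+1)^2*16) * 16^m := Nat.mul_le_mul_right _ h
              _ = (m+1)^2 * 16^(m+1) := by ring
    exact Nat.le_of_mul_le_mul_left key (by positivity)

lemma M_bound (n : ℕ) (hn : 1 ≤ n) :
    (Nat.choose n (n/2) : ℝ) / 2^n ≤ 2 / Real.sqrt n := by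
  set k := (n+1)/2 with hk
  have h2k1 : n ≤ 2*k := by omega
  have h2k2 : 2*k ≤ n+1 := by omega
  have hM : Nat.choose n (n/2) ≤ Nat.centralBinom k :=
    (Nat.choose_le_choose (n/2) h2k1).trans (Nat.choose_le_centralBinom _ k)
  have hcb : (Nat.centralBinom k : ℝ) * Real.sqrt (2*k+1) ≤ 4^k := by
    have h1 : ((Nat.centralBinom k : ℝ))^2 * (2*(k:ℝ)+1) ≤ ((4:ℝ)^k)^2 := by
      calc ((Nat.centralBinom k : ℝ))^2 * (2*(k:ℝ)+1)
          = (((Nat.centralBinom k)^2 * (2*k+1) : ℕ) : ℝ) := by push_cast; ring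
        _ ≤ ((16^k : ℕ) : ℝ) := by exact_mod_cast cB_sq k
        _ = ((4:ℝ)^k)^2 := by push_cast; rw [← pow_mul, mul_comm k 2, pow_mul]; norm_num
    have h2 := Real.sqrt_le_sqrt h1
    rwa [Real.sqrt_mul (by positivity), Real.sqrt_sq (by positivity),
      Real.sqrt_sq (by positivity)] at h2
  have hs : (0:ℝ) < Real.sqrt n := Real.sqrt_pos.mpr (by exact_mod_cast hn)
  rw [div_le_div_iff₀ (by positivity) hs]
  calc (Nat.choose n (n/2) : ℝ) * Real.sqrt n
      ≤ (Nat.centralBinom k : ℝ) * Real.sqrt (2*(k:ℝ)+1) := by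
        apply mul_le_mul (by exact_mod_cast hM) (Real.sqrt_le_sqrt (by exact_mod_cast (by omega : n ≤ 2*k+1)))
          (Real.sqrt_nonneg _) (by positivity)
    _ ≤ 4^k := by exact_mod_cast hcb
    _ ≤ 2 * 2^n := by
        have : (4:ℝ)^k = 2^(2*k) := by rw [pow_mul]; norm_num
        rw [this]
        calc (2:ℝ)^(2*k) ≤ 2^(n+1) := by
              apply pow_le_pow_right₀ (by norm_num) h2k2
          _ = 2 * 2^n := by ring

lemma Kbound (n : ℕ) : 2^(n+1) ≤ K n + 6 * Nat.choose n (n/2) := by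
  classical
  have hsplit := Finset.card_filter_add_card_filter_not
    (s := (univ : Finset (Fin n → Bool))) (p := fun g => 2 ≤ |Tt n g|)
  have hcard : (univ : Finset (Fin n → Bool)).card = 2^n := by
    simp [Finset.card_univ, Fintype.card_fun]
  have h1 := K_ge n
  have h2 := count_small n
  omega

end Aux

/-- The proportion of knotted full resolutions tends to `1/2` as `n → ∞`. -/
theorem knotted_proportion_tendsto_half :
    Filter.Tendsto (fun n : ℕ => (K n : ℝ) / 2 ^ (n + 2)) Filter.atTop
      (nhds (1 / 2)) := by
  have h0 : Filter.Tendsto (fun n : ℕ => (Nat.choose n (n/2) : ℝ) / 2^n)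
      Filter.atTop (nhds 0) := by
    apply squeeze_zero' (Filter.Eventually.of_forall fun n => by positivity)
      (Filter.eventually_atTop.mpr ⟨1, fun n hn => M_bound n hn⟩)
    have hs : Filter.Tendsto (fun n : ℕ => Real.sqrt n) Filter.atTop Filter.atTop := by
      apply Filter.tendsto_atTop_atTop.mpr
      intro b
      refine ⟨⌈b^2⌉₊, fun n hn => ?_⟩
      rcases le_or_gt b 0 with hb | hb
      · exact hb.trans (Real.sqrt_nonneg _)
      · rw [show b = Real.sqrt (b^2) from (Real.sqrt_sq hb.le).symm]
        apply Real.sqrt_le_sqrt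
        calc b^2 ≤ ⌈b^2⌉₊ := Nat.le_ceil _
          _ ≤ n := by exact_mod_cast hn
    simpa [div_eq_mul_inv] using hs.inv_tendsto_atTop.const_mul (2:ℝ)
  have hlowt : Filter.Tendsto
      (fun n : ℕ => 1/2 - (3/2) * ((Nat.choose n (n/2) : ℝ) / 2^n))
      Filter.atTop (nhds (1/2)) := by
    have := Filter.Tendsto.sub (tendsto_const_nhds (x := (1:ℝ)/2) (f := Filter.atTop))
      (h0.const_mul (3/2))
    simpa using this
  apply tendsto_of_tendsto_of_tendsto_of_le_of_le hlowt
    (tendsto_const_nhds (x := (1:ℝ)/2))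
  · intro n
    have hK : (2:ℝ)^(n+1) ≤ (K n : ℝ) + 6 * (Nat.choose n (n/2) : ℝ) := by
      exact_mod_cast Kbound n
    have h2n : (2:ℝ)^n ≠ 0 := by positivity
    rw [sub_le_iff_le_add, div_add' _ _ _ (by positivity : ((2:ℝ)^(n+2)) ≠ 0)]
    rw [le_div_iff₀ (by positivity : (0:ℝ) < 2^(n+2))]
    have e : ((K n : ℝ) + (3/2) * ((Nat.choose n (n/2) : ℝ) / 2^n) * 2^(n+2)) =
        (K n : ℝ) + 6 * (Nat.choose n (n/2) : ℝ) := by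
      field_simp
      ring
    have e2 : (1:ℝ)/2 * 2^(n+2) = 2^(n+1) := by ring
    calc (1:ℝ)/2 * 2^(n+2) = 2^(n+1) := e2
      _ ≤ (K n : ℝ) + 6 * (Nat.choose n (n/2) : ℝ) := hK
      _ = _ := by rw [← e]
  · intro n
    rw [div_le_iff₀ (by positivity : (0:ℝ) < 2^(n+2))]
    calc (K n : ℝ) ≤ 2^(n+1) := by exact_mod_cast K_le n
      _ = 1/2 * 2^(n+2) := by ring
end
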